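/- arXiv:1510.02438 — 14 statements merged into one kernel-verified Lean document; each statement's English description precedes it below -/
import Mathlib

section
/- Let H1 = (V1, E1) and H2 = (V2, E2) be vertex-disjoint 1-Sperner hypergraphs and let z ∉ V1 ∪ V2. If it is not the case that both E1 = {V1} and E2 = {∅}, then the gluing H1 ⊙ H2 is a 1-Sperner hypergraph. Moreover, if E1 = {V1} and E2 = {∅}, then H1 ⊙ H2 is not Sperner (some hyperedge contains another distinct hyperedge). -/
open Finset

/-- A hypergraph with hyperedge set `E` is 1-Sperner if every two distinct
hyperedges `e, f` satisfy `min |e \ f| |f \ e| = 1`. -/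
def OneSperner {α : Type*} [DecidableEq α] (E : Finset (Finset α)) : Prop :=
  ∀ e ∈ E, ∀ f ∈ E, e ≠ f → min (e \ f).card (f \ e).card = 1

/-- The hyperedge set of the gluing of `(V1, E1)` and `(V2, E2)` with new vertex `z`. -/
def glueEdges {α : Type*} [DecidableEq α] (z : α) (V1 : Finset α)
    (E1 E2 : Finset (Finset α)) : Finset (Finset α) :=
  E1.image (fun e => insert z e) ∪ E2.image (fun e => V1 ∪ e)

lemma top_mem_forces {α : Type*} [DecidableEq α] {V1 : Finset α} {E1 : Finset (Finset α)}
    (hE1 : ∀ e ∈ E1, e ⊆ V1) (h1 : OneSperner E1) (hV : V1 ∈ E1) : E1 = {V1} := by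
  ext e
  simp only [mem_singleton]
  constructor
  · intro he
    by_contra hne
    have := h1 e he V1 hV hne
    have h0 : e \ V1 = ∅ := sdiff_eq_empty_iff_subset.mpr (hE1 e he)
    rw [h0] at this
    simp at this
  · rintro rfl; exact hV

lemma bot_mem_forces {α : Type*} [DecidableEq α] {E2 : Finset (Finset α)}
    (h2 : OneSperner E2) (hV : ∅ ∈ E2) : E2 = {∅} := by
  ext e
  simp only [mem_singleton]
  constructor
  · intro he
    by_contra hne
    have := h2 e he ∅ hV hne
    simp at this
  · rintro rfl; exact hV

theorem stmt_0 {α : Type*} [DecidableEq α] (V1 V2 : Finset α)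
    (E1 E2 : Finset (Finset α)) (z : α)
    (hE1 : ∀ e ∈ E1, e ⊆ V1) (hE2 : ∀ e ∈ E2, e ⊆ V2)
    (hdisj : Disjoint V1 V2) (hz : z ∉ V1 ∪ V2)
    (h1 : OneSperner E1) (h2 : OneSperner E2) :
    (¬(E1 = {V1} ∧ E2 = ({∅} : Finset (Finset α))) →
        OneSperner (glueEdges z V1 E1 E2)) ∧
    ((E1 = {V1} ∧ E2 = ({∅} : Finset (Finset α))) →
        ∃ e ∈ glueEdges z V1 E1 E2, ∃ f ∈ glueEdges z V1 E1 E2, e ≠ f ∧ e ⊆ f) := by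
  have hzV1 : z ∉ V1 := fun h => hz (mem_union_left _ h)
  have hzV2 : z ∉ V2 := fun h => hz (mem_union_right _ h)
  -- sdiff computations
  have keyII : ∀ a ∈ E1, ∀ b ∈ E1, insert z a \ insert z b = a \ b := by
    intro a ha b hb
    have hza : z ∉ a := fun h => hzV1 (hE1 a ha h)
    ext x
    simp only [mem_sdiff, mem_insert, not_or]
    constructor
    · rintro ⟨hx1 | hx1, hx2, hx3⟩
      · exact absurd hx1 hx2
      · exact ⟨hx1, hx3⟩
    · rintro ⟨hx1, hx2⟩
      exact ⟨Or.inr hx1, fun h => hza (h ▸ hx1), hx2⟩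
  have keyUU : ∀ a ∈ E2, ∀ b ∈ E2, (V1 ∪ a) \ (V1 ∪ b) = a \ b := by
    intro a ha b hb
    ext x
    simp only [mem_sdiff, mem_union, not_or]
    constructor
    · rintro ⟨hx1 | hx1, hx2, hx3⟩
      · exact absurd hx1 hx2
      · exact ⟨hx1, hx3⟩
    · rintro ⟨hx1, hx2⟩
      exact ⟨Or.inr hx1, fun h => disjoint_left.mp hdisj h (hE2 a ha hx1), hx2⟩
  have keyIU : ∀ a ∈ E1, ∀ b ∈ E2, insert z a \ (V1 ∪ b) = {z} := by
    intro a ha b hb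
    ext x
    simp only [mem_sdiff, mem_insert, mem_union, not_or, mem_singleton]
    constructor
    · rintro ⟨hx1 | hx1, hx2, hx3⟩
      · exact hx1
      · exact absurd (hE1 a ha hx1) hx2
    · rintro rfl
      exact ⟨Or.inl rfl, hzV1, fun h => hzV2 (hE2 b hb h)⟩
  have keyUI : ∀ a ∈ E1, ∀ b ∈ E2, (V1 ∪ b) \ insert z a = (V1 \ a) ∪ b := by
    intro a ha b hb
    ext x
    simp only [mem_sdiff, mem_union, mem_insert, not_or]
    constructor
    · rintro ⟨hx1 | hx1, hx2, hx3⟩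
      · exact Or.inl ⟨hx1, hx3⟩
      · exact Or.inr hx1
    · rintro (⟨hx1, hx2⟩ | hx1)
      · exact ⟨Or.inl hx1, fun h => hzV1 (h ▸ hx1), hx2⟩
      · refine ⟨Or.inr hx1, fun h => hzV2 (h ▸ hE2 b hb hx1), ?_⟩
        exact fun h => disjoint_left.mp hdisj (hE1 a ha h) (hE2 b hb hx1)
  have mixedNE : ¬(E1 = {V1} ∧ E2 = ({∅} : Finset (Finset α))) →
      ∀ a ∈ E1, ∀ b ∈ E2, ((V1 \ a) ∪ b).Nonempty := by
    intro hne a ha b hb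
    rw [nonempty_iff_ne_empty]
    intro hemp
    rw [union_eq_empty] at hemp
    obtain ⟨hVa, hbemp⟩ := hemp
    have haV : a = V1 := subset_antisymm (hE1 a ha) (sdiff_eq_empty_iff_subset.mp hVa)
    subst haV
    subst hbemp
    exact hne ⟨top_mem_forces hE1 h1 ha, bot_mem_forces h2 hb⟩
  constructor
  · intro hne e he f hf hef
    simp only [glueEdges, mem_union, mem_image] at he hf
    obtain ⟨e1, he1, rfl⟩ | ⟨e2, he2, rfl⟩ := he <;>
      obtain ⟨f1, hf1, rfl⟩ | ⟨f2, hf2, rfl⟩ := hf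
    · have hne1 : e1 ≠ f1 := fun h => hef (by rw [h])
      rw [keyII e1 he1 f1 hf1, keyII f1 hf1 e1 he1]
      exact h1 e1 he1 f1 hf1 hne1
    · rw [keyIU e1 he1 f2 hf2, keyUI e1 he1 f2 hf2, card_singleton]
      have := card_pos.mpr (mixedNE hne e1 he1 f2 hf2)
      omega
    · rw [keyIU f1 hf1 e2 he2, keyUI f1 hf1 e2 he2, card_singleton]
      have := card_pos.mpr (mixedNE hne f1 hf1 e2 he2)
      omega
    · have hne2 : e2 ≠ f2 := fun h => hef (by rw [h])
      rw [keyUU e2 he2 f2 hf2, keyUU f2 hf2 e2 he2]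
      exact h2 e2 he2 f2 hf2 hne2
  · rintro ⟨rfl, rfl⟩
    refine ⟨V1, ?_, insert z V1, ?_, ?_, subset_insert z V1⟩
    · simp [glueEdges]
    · simp [glueEdges]
    · intro h
      exact hzV1 (h ▸ mem_insert_self z V1)
end

section
/- Let H1 = (V1, E1) and H2 = (V2, E2) be vertex-disjoint hypergraphs and let z ∉ V1 ∪ V2. Then the complement of the gluing H1 ⊙ H2 (with gluing vertex z) equals the gluing of the complement of H2 with the complement of H1 (again with gluing vertex z); that is, the complement of H1 ⊙ H2 has hyperedge set {{z} ∪ (V2 \ e) : e ∈ E2} ∪ {V2 ∪ (V1 \ e) : e ∈ E1}, where the complement of the gluing is taken with respect to the vertex set V1 ∪ V2 ∪ {z}. -/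
open Finset

theorem stmt_2 {α : Type*} [DecidableEq α] (V1 V2 : Finset α)
    (E1 E2 : Finset (Finset α)) (z : α)
    (hE1 : ∀ e ∈ E1, e ⊆ V1) (hE2 : ∀ e ∈ E2, e ⊆ V2)
    (hdisj : Disjoint V1 V2) (hz : z ∉ V1 ∪ V2) :
    (glueEdges z V1 E1 E2).image (fun e => (insert z (V1 ∪ V2)) \ e) =
      glueEdges z V2 (E2.image (fun e => V2 \ e)) (E1.image (fun e => V1 \ e)) := by
  rw [mem_union] at hz
  push_neg at hz
  obtain ⟨hz1, hz2⟩ := hz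
  simp only [glueEdges, image_union, image_image, Function.comp]
  rw [union_comm]
  congr 1
  · apply image_congr
    intro e he
    have hsub := hE2 e he
    ext a
    have h1 : a ∈ V1 → ¬ a = z := fun h e => hz1 (e ▸ h)
    have h2 : a ∈ V2 → ¬ a = z := fun h e => hz2 (e ▸ h)
    have h3 : a ∈ e → a ∈ V2 := fun h => hsub h
    have h4 : a ∈ V1 → a ∉ V2 := fun h h' => (hdisj.forall_ne_finset h h') rfl
    simp only [Function.comp_apply, mem_sdiff, mem_insert, mem_union]
    tauto
  · apply image_congr
    intro e he
    have hsub := hE1 e he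
    ext a
    have h1 : a ∈ V1 → ¬ a = z := fun h e => hz1 (e ▸ h)
    have h2 : a ∈ V2 → ¬ a = z := fun h e => hz2 (e ▸ h)
    have h3 : a ∈ e → a ∈ V1 := fun h => hsub h
    have h4 : a ∈ V1 → a ∉ V2 := fun h h' => (hdisj.forall_ne_finset h h') rfl
    simp only [Function.comp_apply, mem_sdiff, mem_insert, mem_union]
    tauto
end

section
/- Let H = (V, E) be a hypergraph and let z ∈ V. If H is z-decomposable, then the complement of H is also z-decomposable. -/
open Finset

/-- A hypergraph `(V, E)` is `z`-decomposable if `V` can be partitioned as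
`{z} ∪ V1 ∪ V2` so that `(V, E)` is the gluing of hypergraphs `(V1, E1)` and
`(V2, E2)` with gluing vertex `z`. -/
def ZDecomposable {α : Type*} [DecidableEq α] (V : Finset α) (E : Finset (Finset α))
    (z : α) : Prop :=
  ∃ V1 V2 : Finset α, ∃ E1 E2 : Finset (Finset α),
    Disjoint V1 V2 ∧ z ∉ V1 ∪ V2 ∧ V = insert z (V1 ∪ V2) ∧
    (∀ e ∈ E1, e ⊆ V1) ∧ (∀ e ∈ E2, e ⊆ V2) ∧ E = glueEdges z V1 E1 E2

theorem stmt_3 {α : Type*} [DecidableEq α] (V : Finset α) (E : Finset (Finset α))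
    (z : α) (hz : z ∈ V) (h : ZDecomposable V E z) :
    ZDecomposable V (E.image (fun e => V \ e)) z := by
  obtain ⟨V1, V2, E1, E2, hdisj, hzV, hV, hE1, hE2, hE⟩ := h
  refine ⟨V2, V1, E2.image (fun e => V2 \ e), E1.image (fun e => V1 \ e),
    hdisj.symm, ?_, ?_, ?_, ?_, ?_⟩
  · simpa [Finset.union_comm] using hzV
  · rw [hV, Finset.union_comm]
  · intro e he
    simp only [Finset.mem_image] at he
    obtain ⟨f, _, rfl⟩ := he
    exact Finset.sdiff_subset
  · intro e he
    simp only [Finset.mem_image] at he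
    obtain ⟨f, _, rfl⟩ := he
    exact Finset.sdiff_subset
  · subst hE
    simp only [glueEdges, Finset.image_union, Finset.image_image]
    rw [Finset.union_comm]
    congr 1
    · apply Finset.image_congr
      intro e he
      have hsub := hE2 e he
      simp only [Function.comp]
      ext x
      have h1 : ¬(x ∈ V1 ∧ x ∈ V2) := fun ⟨a, b⟩ => Finset.disjoint_left.mp hdisj a b
      have hz1 : z ∉ V1 ∧ z ∉ V2 := by
        simp only [Finset.mem_union, not_or] at hzV; exact hzV
      have hsub' : x ∈ e → x ∈ V2 := fun h => hsub h
      have hzz : z ∈ e → False := fun h => hz1.2 (hsub h)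
      simp only [Finset.mem_sdiff, Finset.mem_insert, Finset.mem_union, hV, not_or]
      constructor
      · rintro ⟨rfl | hx | hx, hne⟩ <;> tauto
      · rintro (rfl | ⟨hx, hxe⟩) <;>
          refine ⟨by tauto, ?_, ?_⟩ <;> first | tauto | (rintro rfl; tauto)
    · apply Finset.image_congr
      intro e he
      have hsub := hE1 e he
      simp only [Function.comp]
      ext x
      have h1 : ¬(x ∈ V1 ∧ x ∈ V2) := fun ⟨a, b⟩ => Finset.disjoint_left.mp hdisj a b
      have hz1 : z ∉ V1 ∧ z ∉ V2 := by
        simp only [Finset.mem_union, not_or] at hzV; exact hzV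
      have hsub' : x ∈ e → x ∈ V1 := fun h => hsub h
      simp only [Finset.mem_sdiff, Finset.mem_insert, Finset.mem_union, not_or]
      rw [hV]
      simp only [Finset.mem_insert, Finset.mem_union]
      constructor
      · rintro ⟨rfl | hx | hx, hne⟩ <;> tauto
      · rintro (hx | ⟨hx, hxe⟩) <;>
          refine ⟨by tauto, ?_, ?_⟩ <;> first | tauto | (rintro rfl; tauto)
end

section
/- Let H = (V, E) be a 1-Sperner hypergraph and let C ∈ E be a hyperedge of maximum size (|C| ≥ |e| for all e ∈ E). Let x and y be two distinct vertices not in C, and let A, B ∈ E be hyperedges with x ∈ A and y ∈ B. If |A| ≤ |B|, then A ∩ C ⊆ B ∩ C. -/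
open Finset

theorem stmt_5 {α : Type*} [DecidableEq α] (V : Finset α) (E : Finset (Finset α))
    (hE : ∀ e ∈ E, e ⊆ V) (h : OneSperner E)
    (C : Finset α) (hC : C ∈ E) (hCmax : ∀ e ∈ E, e.card ≤ C.card)
    (x y : α) (hxy : x ≠ y) (hx : x ∉ C) (hy : y ∉ C)
    (A B : Finset α) (hA : A ∈ E) (hB : B ∈ E) (hxA : x ∈ A) (hyB : y ∈ B)
    (hAB : A.card ≤ B.card) :
    A ∩ C ⊆ B ∩ C := by
  have key : ∀ s ∈ E, ∀ t ∈ E, s ≠ t → s.card ≤ t.card → (s \ t).card = 1 := by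
    intro s hs t ht hne hle
    have h1 := h s hs t ht hne
    have e1 := Finset.card_sdiff_add_card_inter s t
    have e2 := Finset.card_sdiff_add_card_inter t s
    rw [Finset.inter_comm] at e2
    omega
  have hBC : B ≠ C := fun he => hy (he ▸ hyB)
  have hBC1 : (B \ C).card = 1 := key B hB C hC hBC (hCmax B hB)
  have hxB : x ∉ B := by
    intro hxB
    obtain ⟨z, hz⟩ := card_eq_one.mp hBC1
    have hx' : x ∈ B \ C := mem_sdiff.mpr ⟨hxB, hx⟩
    have hy' : y ∈ B \ C := mem_sdiff.mpr ⟨hyB, hy⟩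
    rw [hz, mem_singleton] at hx' hy'
    exact hxy (hx'.trans hy'.symm)
  have hABne : A ≠ B := fun he => hxB (he ▸ hxA)
  have hAB1 : (A \ B).card = 1 := key A hA B hB hABne hAB
  intro a ha
  rw [mem_inter] at ha ⊢
  refine ⟨?_, ha.2⟩
  by_contra haB
  obtain ⟨z, hz⟩ := card_eq_one.mp hAB1
  have hx' : x ∈ A \ B := mem_sdiff.mpr ⟨hxA, hxB⟩
  have ha' : a ∈ A \ B := mem_sdiff.mpr ⟨ha.1, haB⟩
  rw [hz, mem_singleton] at hx' ha'
  exact hx (hx' ▸ ha' ▸ ha.2)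
end

section
/- Every 1-Sperner hypergraph H = (V, E) with V ≠ ∅ is 1-decomposable; that is, there exist a vertex z ∈ V, a partition V = {z} ∪ V1 ∪ V2, and 1-Sperner hypergraphs H1 = (V1, E1) and H2 = (V2, E2) such that H = H1 ⊙ H2 with gluing vertex z. -/
open Finset

section Aux

variable {α : Type*} [DecidableEq α]

lemma card_sdiff_le_of_card_le' {s t : Finset α} (h : s.card ≤ t.card) :
    (s \ t).card ≤ (t \ s).card := by
  have h1 := Finset.card_sdiff_add_card_inter s t
  have h2 := Finset.card_sdiff_add_card_inter t s
  rw [Finset.inter_comm] at h2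
  omega

lemma sdiff_eq_singleton_of_card' {s t : Finset α} {z : α} (h : (s \ t).card = 1)
    (hz : z ∈ s \ t) : s \ t = {z} := by
  obtain ⟨a, ha⟩ := Finset.card_eq_one.mp h
  rw [ha] at hz ⊢
  rw [Finset.mem_singleton] at hz
  rw [hz]

lemma good_decomp (V : Finset α) (E : Finset (Finset α))
    (hE : ∀ e ∈ E, e ⊆ V) (h : OneSperner E) (z : α) (hzV : z ∈ V)
    (hgood : ∀ e ∈ E, z ∈ e → ∀ f ∈ E, z ∉ f → e.erase z ⊆ f) :
    ∃ V1 V2 : Finset α, ∃ E1 E2 : Finset (Finset α),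
      Disjoint V1 V2 ∧ z ∉ V1 ∪ V2 ∧ V = insert z (V1 ∪ V2) ∧
      (∀ e ∈ E1, e ⊆ V1) ∧ (∀ e ∈ E2, e ⊆ V2) ∧
      OneSperner E1 ∧ OneSperner E2 ∧ E = glueEdges z V1 E1 E2 := by
  classical
  set V1 : Finset α := ((E.filter fun e => z ∈ e).biUnion id).erase z with hV1def
  have hV1z : z ∉ V1 := Finset.notMem_erase _ _
  have hV1V : V1 ⊆ V := by
    intro x hx
    have hx' := Finset.mem_of_mem_erase hx
    simp only [Finset.mem_biUnion, Finset.mem_filter, id] at hx'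
    obtain ⟨e, ⟨heE, _⟩, hxe⟩ := hx'
    exact hE e heE hxe
  have hV1sub : ∀ f ∈ E, z ∉ f → V1 ⊆ f := by
    intro f hf hzf x hx
    rw [hV1def, Finset.mem_erase] at hx
    obtain ⟨hxz, hx⟩ := hx
    simp only [Finset.mem_biUnion, Finset.mem_filter, id] at hx
    obtain ⟨e, ⟨heE, hze⟩, hxe⟩ := hx
    exact hgood e heE hze f hf hzf (Finset.mem_erase.mpr ⟨hxz, hxe⟩)
  have hsubV1 : ∀ e ∈ E, z ∈ e → e ⊆ insert z V1 := by
    intro e he hze x hx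
    by_cases hxz : x = z
    · exact hxz ▸ Finset.mem_insert_self z V1
    · refine Finset.mem_insert_of_mem ?_
      rw [hV1def, Finset.mem_erase]
      refine ⟨hxz, ?_⟩
      simp only [Finset.mem_biUnion, Finset.mem_filter, id]
      exact ⟨e, ⟨he, hze⟩, hx⟩
  set E1 : Finset (Finset α) := (E.filter fun e => z ∈ e).image (fun e => e.erase z)
    with hE1def
  set E2 : Finset (Finset α) := (E.filter fun e => z ∉ e).image (fun e => e \ V1)
    with hE2def
  refine ⟨V1, V \ insert z V1, E1, E2, ?_, ?_, ?_, ?_, ?_, ?_, ?_, ?_⟩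
  · exact (Finset.sdiff_disjoint.mono_right (Finset.subset_insert z V1)).symm
  · simp [Finset.mem_union, Finset.mem_sdiff, hV1z]
  · ext x
    simp only [Finset.mem_insert, Finset.mem_union, Finset.mem_sdiff]
    constructor
    · intro hx
      by_cases hxz : x = z
      · exact Or.inl hxz
      · by_cases hxV1 : x ∈ V1
        · exact Or.inr (Or.inl hxV1)
        · refine Or.inr (Or.inr ⟨hx, ?_⟩)
          simp [Finset.mem_insert, hxz, hxV1]
    · rintro (rfl | hx | ⟨hx, _⟩)
      · exact hzV
      · exact hV1V hx
      · exact hx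
  · intro e' he'
    rw [hE1def, Finset.mem_image] at he'
    obtain ⟨e, he, rfl⟩ := he'
    rw [Finset.mem_filter] at he
    intro x hx
    obtain ⟨hxz, hxe⟩ := Finset.mem_erase.mp hx
    have := hsubV1 e he.1 he.2 hxe
    rcases Finset.mem_insert.mp this with hc | hc
    · exact absurd hc hxz
    · exact hc
  · intro e' he'
    rw [hE2def, Finset.mem_image] at he'
    obtain ⟨e, he, rfl⟩ := he'
    rw [Finset.mem_filter] at he
    intro x hx
    rw [Finset.mem_sdiff] at hx
    rw [Finset.mem_sdiff]
    refine ⟨hE e he.1 hx.1, ?_⟩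
    rw [Finset.mem_insert]
    push_neg
    exact ⟨fun hc => he.2 (hc ▸ hx.1), hx.2⟩
  · -- OneSperner E1
    have key : ∀ e f : Finset α, z ∈ f → e.erase z \ f.erase z = e \ f := by
      intro e f hzf
      ext x
      simp only [Finset.mem_sdiff]
      constructor
      · rintro ⟨hxe, hxnf⟩
        rw [Finset.mem_erase] at hxe
        exact ⟨hxe.2, fun hxf => hxnf (Finset.mem_erase.mpr ⟨hxe.1, hxf⟩)⟩
      · rintro ⟨hxe, hxf⟩
        have hxz : x ≠ z := fun hc => hxf (hc ▸ hzf)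
        exact ⟨Finset.mem_erase.mpr ⟨hxz, hxe⟩, fun hc => hxf (Finset.mem_erase.mp hc).2⟩
    intro a ha b hb hab
    rw [hE1def, Finset.mem_image] at ha hb
    obtain ⟨e, he, rfl⟩ := ha
    obtain ⟨f, hf, rfl⟩ := hb
    rw [Finset.mem_filter] at he hf
    have hef : e ≠ f := fun hc => hab (hc ▸ rfl)
    rw [key e f hf.2, key f e he.2]
    exact h e he.1 f hf.1 hef
  · -- OneSperner E2
    intro a ha b hb hab
    rw [hE2def, Finset.mem_image] at ha hb
    obtain ⟨e, he, rfl⟩ := ha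
    obtain ⟨f, hf, rfl⟩ := hb
    rw [Finset.mem_filter] at he hf
    have hef : e ≠ f := fun hc => hab (hc ▸ rfl)
    have key : ∀ p : Finset α, ∀ q ∈ E, z ∉ q → (p \ V1) \ (q \ V1) = p \ q := by
      intro p q hq hzq
      ext x
      simp only [Finset.mem_sdiff, not_and, not_not]
      constructor
      · rintro ⟨⟨hxp, hxV1⟩, hx⟩
        exact ⟨hxp, fun hxq => hxV1 (hx hxq)⟩
      · rintro ⟨hxp, hxq⟩
        exact ⟨⟨hxp, fun hxV1 => hxq (hV1sub q hq hzq hxV1)⟩, fun hc => absurd hc hxq⟩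
    rw [key e f hf.1 hf.2, key f e he.1 he.2]
    exact h e he.1 f hf.1 hef
  · ext e
    constructor
    · intro he
      rw [glueEdges, Finset.mem_union]
      by_cases hze : z ∈ e
      · left
        rw [Finset.mem_image]
        refine ⟨e.erase z, ?_, Finset.insert_erase hze⟩
        rw [hE1def, Finset.mem_image]
        exact ⟨e, Finset.mem_filter.mpr ⟨he, hze⟩, rfl⟩
      · right
        rw [Finset.mem_image]
        refine ⟨e \ V1, ?_, Finset.union_sdiff_of_subset (hV1sub e he hze)⟩
        rw [hE2def, Finset.mem_image]
        exact ⟨e, Finset.mem_filter.mpr ⟨he, hze⟩, rfl⟩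
    · intro he
      rw [glueEdges, Finset.mem_union, Finset.mem_image, Finset.mem_image] at he
      rcases he with ⟨a, ha, rfl⟩ | ⟨a, ha, rfl⟩
      · rw [hE1def, Finset.mem_image] at ha
        obtain ⟨e, he, rfl⟩ := ha
        rw [Finset.mem_filter] at he
        rw [Finset.insert_erase he.2]
        exact he.1
      · rw [hE2def, Finset.mem_image] at ha
        obtain ⟨e, he, rfl⟩ := ha
        rw [Finset.mem_filter] at he
        rw [Finset.union_sdiff_of_subset (hV1sub e he.1 he.2)]
        exact he.1

end Aux

theorem stmt_7 {α : Type*} [DecidableEq α] (V : Finset α) (E : Finset (Finset α))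
    (hE : ∀ e ∈ E, e ⊆ V) (h : OneSperner E) (hV : V.Nonempty) :
    ∃ z ∈ V, ∃ V1 V2 : Finset α, ∃ E1 E2 : Finset (Finset α),
      Disjoint V1 V2 ∧ z ∉ V1 ∪ V2 ∧ V = insert z (V1 ∪ V2) ∧
      (∀ e ∈ E1, e ⊆ V1) ∧ (∀ e ∈ E2, e ⊆ V2) ∧
      OneSperner E1 ∧ OneSperner E2 ∧ E = glueEdges z V1 E1 E2 := by
  classical
  by_cases hEne : E.Nonempty
  · obtain ⟨fs, hfsE, hfsmin⟩ := Finset.exists_min_image E (fun e => e.card) hEne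
    by_cases hrest : (E.erase fs).Nonempty
    · obtain ⟨g, hgE', hgmax⟩ := Finset.exists_max_image (E.erase fs) (fun e => e.card) hrest
      have hgE : g ∈ E := Finset.mem_of_mem_erase hgE'
      have hgfs : g ≠ fs := Finset.ne_of_mem_erase hgE'
      have hfs1 : ∀ f ∈ E, f ≠ fs → (fs \ f).card = 1 := by
        intro f hf hne
        have hm := h fs hfsE f hf (Ne.symm hne)
        have hle : (fs \ f).card ≤ (f \ fs).card :=
          card_sdiff_le_of_card_le' (hfsmin f hf)
        rw [min_eq_left hle] at hm
        exact hm
      have hcardfsg := hfs1 g hgE hgfs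
      obtain ⟨z, hzdef⟩ := Finset.card_eq_one.mp hcardfsg
      have hzmem : z ∈ fs \ g := by rw [hzdef]; exact Finset.mem_singleton_self z
      have hzfs : z ∈ fs := (Finset.mem_sdiff.mp hzmem).1
      have hzg : z ∉ g := (Finset.mem_sdiff.mp hzmem).2
      have hzV : z ∈ V := hE fs hfsE hzfs
      refine ⟨z, hzV, good_decomp V E hE h z hzV ?_⟩
      intro e heE hze f hfE hzf
      by_contra hcon
      obtain ⟨w, hw1, hwf⟩ := Finset.not_subset.mp hcon
      obtain ⟨hwz, hwe⟩ := Finset.mem_erase.mp hw1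
      have hef : e ≠ f := fun hc => hzf (hc ▸ hze)
      have hffs : f ≠ fs := fun hc => hzf (hc ▸ hzfs)
      have h2 : 2 ≤ (e \ f).card := by
        have hsub : {z, w} ⊆ e \ f := by
          intro x hx
          rcases Finset.mem_insert.mp hx with rfl | hx
          · exact Finset.mem_sdiff.mpr ⟨hze, hzf⟩
          · rw [Finset.mem_singleton] at hx
            subst hx
            exact Finset.mem_sdiff.mpr ⟨hwe, hwf⟩
        have := Finset.card_le_card hsub
        rwa [Finset.card_pair hwz.symm] at this
      have hfe1 : (f \ e).card = 1 := by
        have hm := h e heE f hfE hef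
        rcases le_total (e \ f).card (f \ e).card with hle | hle
        · rw [min_eq_left hle] at hm
          omega
        · rw [min_eq_right hle] at hm
          exact hm
      have hefs : e ≠ fs := by
        intro hc
        rw [hc] at h2
        have := hfs1 f hfE hffs
        omega
      have hfsf : fs \ f = {z} :=
        sdiff_eq_singleton_of_card' (hfs1 f hfE hffs) (Finset.mem_sdiff.mpr ⟨hzfs, hzf⟩)
      obtain ⟨x, hxdef⟩ := Finset.card_eq_one.mp (hfs1 e heE hefs)
      have hxmem : x ∈ fs \ e := by rw [hxdef]; exact Finset.mem_singleton_self x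
      have hxfs : x ∈ fs := (Finset.mem_sdiff.mp hxmem).1
      have hxe : x ∉ e := (Finset.mem_sdiff.mp hxmem).2
      have hxz : x ≠ z := fun hc => hxe (hc ▸ hze)
      have hxf : x ∈ f := by
        by_contra hxf
        have hmem : x ∈ fs \ f := Finset.mem_sdiff.mpr ⟨hxfs, hxf⟩
        rw [hfsf, Finset.mem_singleton] at hmem
        exact hxz hmem
      have hfex : f \ e = {x} :=
        sdiff_eq_singleton_of_card' hfe1 (Finset.mem_sdiff.mpr ⟨hxf, hxe⟩)
      have hxg : x ∈ g := by
        by_contra hxg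
        have hmem : x ∈ fs \ g := Finset.mem_sdiff.mpr ⟨hxfs, hxg⟩
        rw [hzdef, Finset.mem_singleton] at hmem
        exact hxz hmem
      have heg : e ≠ g := fun hc => hzg (hc ▸ hze)
      have hecard : e.card ≤ g.card := hgmax e (Finset.mem_erase.mpr ⟨hefs, heE⟩)
      have hegz : e \ g = {z} := by
        have hm := h e heE g hgE heg
        have hz' : z ∈ e \ g := Finset.mem_sdiff.mpr ⟨hze, hzg⟩
        rcases le_total (e \ g).card (g \ e).card with hle | hle
        · rw [min_eq_left hle] at hm
          exact sdiff_eq_singleton_of_card' hm hz'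
        · rw [min_eq_right hle] at hm
          have h1 := Finset.card_sdiff_add_card_inter e g
          have h2' := Finset.card_sdiff_add_card_inter g e
          rw [Finset.inter_comm] at h2'
          have hz1 : 0 < (e \ g).card := Finset.card_pos.mpr ⟨z, hz'⟩
          have hone : (e \ g).card = 1 := by omega
          exact sdiff_eq_singleton_of_card' hone hz'
      have hfg : f ⊆ g := by
        intro a haf
        by_contra hag
        have haex : a ∈ e ∨ a = x := by
          by_cases hae : a ∈ e
          · exact Or.inl hae
          · right
            have hmem : a ∈ f \ e := Finset.mem_sdiff.mpr ⟨haf, hae⟩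
            rw [hfex, Finset.mem_singleton] at hmem
            exact hmem
        rcases haex with hae | rfl
        · have hmem : a ∈ e \ g := Finset.mem_sdiff.mpr ⟨hae, hag⟩
          rw [hegz, Finset.mem_singleton] at hmem
          subst hmem
          exact hzf haf
        · exact hag hxg
      by_cases hfg' : f = g
      · have hmem : w ∈ e \ g := Finset.mem_sdiff.mpr ⟨hwe, hfg' ▸ hwf⟩
        rw [hegz, Finset.mem_singleton] at hmem
        exact hwz hmem
      · have hm := h f hfE g hgE hfg'
        have hempty : f \ g = ∅ := Finset.sdiff_eq_empty_iff_subset.mpr hfg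
        rw [hempty, Finset.card_empty, Nat.zero_min] at hm
        exact absurd hm (by omega)
    · have hEfs : ∀ f ∈ E, f = fs := by
        intro f hf
        by_contra hc
        exact hrest ⟨f, Finset.mem_erase.mpr ⟨hc, hf⟩⟩
      by_cases hfs0 : fs.Nonempty
      · obtain ⟨z, hz⟩ := hfs0
        have hzV : z ∈ V := hE fs hfsE hz
        refine ⟨z, hzV, good_decomp V E hE h z hzV ?_⟩
        intro e he hze f hf hzf
        have : z ∈ f := by rw [hEfs f hf]; exact hz
        exact absurd this hzf
      · obtain ⟨z, hzV⟩ := hV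
        refine ⟨z, hzV, good_decomp V E hE h z hzV ?_⟩
        intro e he hze f hf hzf
        rw [Finset.not_nonempty_iff_eq_empty] at hfs0
        rw [hEfs e he, hfs0] at hze
        exact absurd hze (Finset.notMem_empty z)
  · obtain ⟨z, hzV⟩ := hV
    rw [Finset.not_nonempty_iff_eq_empty] at hEne
    refine ⟨z, hzV, good_decomp V E hE h z hzV ?_⟩
    intro e he
    rw [hEne] at he
    exact absurd he (Finset.notMem_empty e)
end

section
/- Every 1-Sperner hypergraph is threshold: if H = (V, E) is a hypergraph such that every two distinct hyperedges e, f ∈ E satisfy min(|e \ f|, |f \ e|) = 1, then there exist a weight function w : V → ℕ and a threshold t ∈ ℕ such that for every subset X ⊆ V, ∑_{v ∈ X} w(v) ≥ t if and only if e ⊆ X for some e ∈ E. -/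
open Finset

private lemma sdiff_card_one {α : Type*} [DecidableEq α] {e f : Finset α}
    (hmin : min (e \ f).card (f \ e).card = 1) (hcard : e.card ≤ f.card) :
    (e \ f).card = 1 := by
  have h1 := Finset.card_sdiff_add_card_inter e f
  have h2 := Finset.card_sdiff_add_card_inter f e
  rw [Finset.inter_comm] at h2
  omega

private lemma case_empty {α : Type*} [DecidableEq α] (V : Finset α) :
    ∃ w : α → ℕ, ∃ t : ℕ, ∀ X ⊆ V,
      (t ≤ ∑ v ∈ X, w v ↔ ∃ e ∈ (∅ : Finset (Finset α)), e ⊆ X) := by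
  refine ⟨fun _ => 0, 1, fun X _ => ?_⟩
  simp

private lemma case_single {α : Type*} [DecidableEq α] (V : Finset α) (e : Finset α) :
    ∃ w : α → ℕ, ∃ t : ℕ, ∀ X ⊆ V,
      (t ≤ ∑ v ∈ X, w v ↔ ∃ f ∈ ({e} : Finset (Finset α)), f ⊆ X) := by
  refine ⟨fun v => if v ∈ e then 1 else 0, e.card, fun X _ => ?_⟩
  have hsum : ∑ v ∈ X, (if v ∈ e then 1 else 0) = (X ∩ e).card := by
    rw [Finset.sum_ite_mem]
    simp
  rw [hsum]
  simp only [mem_singleton, exists_eq_left]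
  constructor
  · intro hle
    have heq : X ∩ e = e :=
      Finset.eq_of_subset_of_card_le (Finset.inter_subset_right) hle
    intro x hx
    have : x ∈ X ∩ e := by rw [heq]; exact hx
    exact (Finset.mem_inter.mp this).1
  · intro hsub
    have heq : X ∩ e = e := Finset.inter_eq_right.mpr hsub
    rw [heq]

private lemma main_aux {α : Type*} [DecidableEq α] (n : ℕ) :
    ∀ (V : Finset α) (E : Finset (Finset α)), V.card ≤ n →
      (∀ e ∈ E, e ⊆ V) → OneSperner E →
      ∃ w : α → ℕ, ∃ t : ℕ, ∀ X ⊆ V, (t ≤ ∑ v ∈ X, w v ↔ ∃ e ∈ E, e ⊆ X) := by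
  induction n with
  | zero =>
    intro V E hV hE h
    have hV0 : V = ∅ := Finset.card_eq_zero.mp (Nat.le_zero.mp hV)
    have hsub : E ⊆ {∅} := by
      intro e he
      rw [mem_singleton]
      have := hE e he
      rw [hV0] at this
      exact Finset.subset_empty.mp this
    rcases Finset.subset_singleton_iff.mp hsub with rfl | rfl
    · exact case_empty V
    · exact case_single V ∅
  | succ n ih =>
    intro V E hV hE h
    by_cases hE0 : E = ∅
    · subst hE0; exact case_empty V
    obtain ⟨e1, he1, he1min⟩ :=
      Finset.exists_min_image E Finset.card (Finset.nonempty_iff_ne_empty.mpr hE0)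
    by_cases hE1 : E = {e1}
    · subst hE1; exact case_single V e1
    have herase : (E.erase e1).Nonempty := by
      rw [Finset.nonempty_iff_ne_empty]
      intro hcon
      apply hE1
      apply Finset.eq_singleton_iff_unique_mem.mpr
      refine ⟨he1, fun x hx => ?_⟩
      by_contra hne
      have : x ∈ E.erase e1 := Finset.mem_erase.mpr ⟨hne, hx⟩
      rw [hcon] at this
      exact absurd this (Finset.notMem_empty x)
    obtain ⟨em, hem', hemmax'⟩ := Finset.exists_max_image (E.erase e1) Finset.card herase
    have hemne : em ≠ e1 := (Finset.mem_erase.mp hem').1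
    have hem : em ∈ E := (Finset.mem_erase.mp hem').2
    have hemmax : ∀ f ∈ E, f.card ≤ em.card := by
      intro f hf
      by_cases hfe1 : f = e1
      · subst hfe1; exact he1min em hem
      · exact hemmax' f (Finset.mem_erase.mpr ⟨hfe1, hf⟩)
    -- the special vertex z
    have hz1 : (e1 \ em).card = 1 :=
      sdiff_card_one (h e1 he1 em hem (Ne.symm hemne)) (he1min em hem)
    obtain ⟨z, hz⟩ := Finset.card_eq_one.mp hz1
    have hze1 : z ∈ e1 := by
      have : z ∈ e1 \ em := hz ▸ Finset.mem_singleton_self z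
      exact (Finset.mem_sdiff.mp this).1
    have hzem : z ∉ em := by
      have : z ∈ e1 \ em := hz ▸ Finset.mem_singleton_self z
      exact (Finset.mem_sdiff.mp this).2
    -- the key structural claim
    have key : ∀ e ∈ E, z ∈ e → ∀ f ∈ E, z ∉ f → e \ f = {z} := by
      intro e he hze f hf hzf
      have hef : e ≠ f := by rintro rfl; exact hzf hze
      have hzef : z ∈ e \ f := Finset.mem_sdiff.mpr ⟨hze, hzf⟩
      have hmin := h e he f hf hef
      by_cases hef1 : (e \ f).card = 1
      · obtain ⟨a, ha⟩ := Finset.card_eq_one.mp hef1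
        rw [ha] at hzef ⊢
        rw [Finset.mem_singleton.mp hzef]
      exfalso
      have hge2 : 2 ≤ (e \ f).card := by
        have : 1 ≤ (e \ f).card := Finset.card_pos.mpr ⟨z, hzef⟩
        omega
      have hfe1 : (f \ e).card = 1 := by omega
      -- e ≠ em, so e \ em = {z}
      have heem : e ≠ em := by rintro rfl; exact hzem hze
      have heemc : (e \ em).card = 1 :=
        sdiff_card_one (h e he em hem heem) (hemmax e he)
      have heems : e \ em = {z} := by
        obtain ⟨a, ha⟩ := Finset.card_eq_one.mp heemc
        have : z ∈ e \ em := Finset.mem_sdiff.mpr ⟨hze, hzem⟩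
        rw [ha] at this ⊢
        rw [Finset.mem_singleton.mp this]
      -- |e| ≥ |f| + 1
      have hcef : f.card + 1 ≤ e.card := by
        have h1 := Finset.card_sdiff_add_card_inter e f
        have h2 := Finset.card_sdiff_add_card_inter f e
        rw [Finset.inter_comm] at h2
        omega
      -- f ≠ em
      have hfem : f ≠ em := by
        rintro rfl
        rw [heems] at hge2
        simp at hge2
      have hfemc : (f \ em).card = 1 :=
        sdiff_card_one (h f hf em hem hfem) (hemmax f hf)
      -- e1 ≠ e, so e1 \ e = {a}
      have he1e : e1 ≠ e := by
        intro hcon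
        have := he1min f hf
        rw [hcon] at this
        omega
      have h1ec : (e1 \ e).card = 1 := by
        have : e1.card ≤ e.card := he1min e he
        exact sdiff_card_one (h e1 he1 e he he1e) this
      obtain ⟨a, ha⟩ := Finset.card_eq_one.mp h1ec
      have hae1 : a ∈ e1 := by
        have : a ∈ e1 \ e := ha ▸ Finset.mem_singleton_self a
        exact (Finset.mem_sdiff.mp this).1
      have hane : a ∉ e := by
        have : a ∈ e1 \ e := ha ▸ Finset.mem_singleton_self a
        exact (Finset.mem_sdiff.mp this).2
      have haz : a ≠ z := by rintro rfl; exact hane hze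
      -- e1 \ f = {z}
      have h1fs : e1 \ f = {z} := by
        have h1fc : (e1 \ f).card = 1 := by
          have hff : e1 ≠ f := by
            intro hcon; rw [← hcon] at hzf; exact hzf hze1
          exact sdiff_card_one (h e1 he1 f hf hff) (he1min f hf)
        obtain ⟨b, hb⟩ := Finset.card_eq_one.mp h1fc
        have : z ∈ e1 \ f := Finset.mem_sdiff.mpr ⟨hze1, hzf⟩
        rw [hb] at this ⊢
        rw [Finset.mem_singleton.mp this]
      have haf : a ∈ f := by
        by_contra hcon
        have : a ∈ e1 \ f := Finset.mem_sdiff.mpr ⟨hae1, hcon⟩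
        rw [h1fs] at this
        exact haz (Finset.mem_singleton.mp this)
      have hfes : f \ e = {a} := by
        obtain ⟨b, hb⟩ := Finset.card_eq_one.mp hfe1
        have : a ∈ f \ e := Finset.mem_sdiff.mpr ⟨haf, hane⟩
        rw [hb] at this ⊢
        rw [Finset.mem_singleton.mp this]
      have haem : a ∈ em := by
        by_contra hcon
        have : a ∈ e1 \ em := Finset.mem_sdiff.mpr ⟨hae1, hcon⟩
        rw [hz] at this
        exact haz (Finset.mem_singleton.mp this)
      obtain ⟨y, hy⟩ := Finset.card_eq_one.mp hfemc
      have hyf : y ∈ f := by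
        have : y ∈ f \ em := hy ▸ Finset.mem_singleton_self y
        exact (Finset.mem_sdiff.mp this).1
      have hyem : y ∉ em := by
        have : y ∈ f \ em := hy ▸ Finset.mem_singleton_self y
        exact (Finset.mem_sdiff.mp this).2
      have hya : y ≠ a := by rintro rfl; exact hyem haem
      have hye : y ∈ e := by
        by_contra hcon
        have : y ∈ f \ e := Finset.mem_sdiff.mpr ⟨hyf, hcon⟩
        rw [hfes] at this
        exact hya (Finset.mem_singleton.mp this)
      have : y ∈ e \ em := Finset.mem_sdiff.mpr ⟨hye, hyem⟩
      rw [heems] at this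
      rw [Finset.mem_singleton.mp this] at hyf
      exact hzf hyf
    -- the decomposition
    set V1 : Finset α := (E.filter (fun e => z ∈ e)).biUnion (fun e => e \ {z}) with hV1def
    set E1 : Finset (Finset α) := (E.filter (fun e => z ∈ e)).image (fun e => e \ {z}) with hE1def
    set V2 : Finset α := V \ insert z V1 with hV2def
    set E2 : Finset (Finset α) := (E.filter (fun e => z ∉ e)).image (fun e => e \ V1) with hE2def
    have hzV : z ∈ V := hE e1 he1 hze1
    have hV1sub : V1 ⊆ V.erase z := by
      intro x hx
      obtain ⟨e, he, hxe⟩ := Finset.mem_biUnion.mp hx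
      rw [Finset.mem_sdiff, Finset.mem_singleton] at hxe
      exact Finset.mem_erase.mpr ⟨hxe.2, hE e (Finset.mem_filter.mp he).1 hxe.1⟩
    have hV2sub : V2 ⊆ V.erase z := by
      intro x hx
      rw [hV2def, Finset.mem_sdiff, Finset.mem_insert] at hx
      push_neg at hx
      exact Finset.mem_erase.mpr ⟨hx.2.1, hx.1⟩
    have hcard_erase : (V.erase z).card ≤ n := by
      have := Finset.card_erase_of_mem hzV
      omega
    have hV1card : V1.card ≤ n := le_trans (Finset.card_le_card hV1sub) hcard_erase
    have hV2card : V2.card ≤ n := le_trans (Finset.card_le_card hV2sub) hcard_erase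
    have hE1sub : ∀ a ∈ E1, a ⊆ V1 := by
      intro a ha
      obtain ⟨e, he, rfl⟩ := Finset.mem_image.mp ha
      exact Finset.subset_biUnion_of_mem (fun e => e \ {z}) he
    have hV1f : ∀ f ∈ E, z ∉ f → V1 ⊆ f := by
      intro f hf hzf x hx
      obtain ⟨e, he, hxe⟩ := Finset.mem_biUnion.mp hx
      rw [Finset.mem_filter] at he
      rw [Finset.mem_sdiff, Finset.mem_singleton] at hxe
      by_contra hcon
      have : x ∈ e \ f := Finset.mem_sdiff.mpr ⟨hxe.1, hcon⟩
      rw [key e he.1 he.2 f hf hzf] at this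
      exact hxe.2 (Finset.mem_singleton.mp this)
    have hE2sub : ∀ b ∈ E2, b ⊆ V2 := by
      intro b hb
      obtain ⟨f, hf, rfl⟩ := Finset.mem_image.mp hb
      rw [Finset.mem_filter] at hf
      intro x hx
      rw [Finset.mem_sdiff] at hx
      rw [hV2def, Finset.mem_sdiff, Finset.mem_insert]
      push_neg
      refine ⟨hE f hf.1 hx.1, fun hxz => ?_, hx.2⟩
      exact hf.2 (hxz ▸ hx.1)
    have hsp1 : OneSperner E1 := by
      intro a ha b hb hab
      obtain ⟨e, he, rfl⟩ := Finset.mem_image.mp ha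
      obtain ⟨e', he', rfl⟩ := Finset.mem_image.mp hb
      rw [Finset.mem_filter] at he he'
      have hee' : e ≠ e' := by rintro rfl; exact hab rfl
      have hid : ∀ (u u' : Finset α), z ∈ u' → (u \ {z}) \ (u' \ {z}) = u \ u' := by
        intro u u' hzu'
        ext x
        simp only [Finset.mem_sdiff, Finset.mem_singleton]
        constructor
        · rintro ⟨⟨hxu, hxz⟩, hn⟩
          refine ⟨hxu, fun hxu' => hn ⟨hxu', hxz⟩⟩
        · rintro ⟨hxu, hxu'⟩
          have hxz : x ≠ z := by rintro rfl; exact hxu' hzu'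
          exact ⟨⟨hxu, hxz⟩, fun hc => hxu' hc.1⟩
      rw [hid e e' he'.2, hid e' e he.2]
      exact h e he.1 e' he'.1 hee'
    have hsp2 : OneSperner E2 := by
      intro a ha b hb hab
      obtain ⟨f, hf, rfl⟩ := Finset.mem_image.mp ha
      obtain ⟨f', hf', rfl⟩ := Finset.mem_image.mp hb
      rw [Finset.mem_filter] at hf hf'
      have hff' : f ≠ f' := by rintro rfl; exact hab rfl
      have hid : ∀ (u u' : Finset α), V1 ⊆ u' → (u \ V1) \ (u' \ V1) = u \ u' := by
        intro u u' hsub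
        ext x
        simp only [Finset.mem_sdiff]
        constructor
        · rintro ⟨⟨hxu, hxV⟩, hn⟩
          refine ⟨hxu, fun hxu' => hn ⟨hxu', hxV⟩⟩
        · rintro ⟨hxu, hxu'⟩
          have hxV : x ∉ V1 := fun hc => hxu' (hsub hc)
          exact ⟨⟨hxu, hxV⟩, fun hc => hxu' hc.1⟩
      rw [hid f f' (hV1f f' hf'.1 hf'.2), hid f' f (hV1f f hf.1 hf.2)]
      exact h f hf.1 f' hf'.1 hff'
    obtain ⟨w1, t1, h1⟩ := ih V1 E1 hV1card hE1sub hsp1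
    obtain ⟨w2, t2, h2⟩ := ih V2 E2 hV2card hE2sub hsp2
    set n1 := V1.card with hn1def
    set W1 := ∑ v ∈ V1, w1 v with hW1def
    set W2 := ∑ v ∈ V2, w2 v with hW2def
    have he1zE1 : e1 \ {z} ∈ E1 := by
      rw [hE1def, Finset.mem_image]
      exact ⟨e1, Finset.mem_filter.mpr ⟨he1, hze1⟩, rfl⟩
    have ht1W1 : t1 ≤ W1 := by
      rw [hW1def]
      exact (h1 V1 (subset_refl V1)).mpr ⟨e1 \ {z}, he1zE1, hE1sub _ he1zE1⟩
    obtain ⟨d, hd⟩ : ∃ d, W1 = t1 + d := ⟨W1 - t1, by omega⟩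
    set B := W2 + 1 with hBdef
    set A := B * (n1 + 1) with hAdef
    set Z := A * d + B * n1 + t2 with hZdef
    refine ⟨fun v => (if v = z then Z else 0) + (if v ∈ V1 then A * w1 v + B else 0) +
      (if v ∈ V2 then w2 v else 0), A * t1 + Z, ?_⟩
    intro X hX
    have hsum : ∑ v ∈ X, ((if v = z then Z else 0) + (if v ∈ V1 then A * w1 v + B else 0) +
        (if v ∈ V2 then w2 v else 0)) =
        (if z ∈ X then Z else 0) + (A * ∑ v ∈ X ∩ V1, w1 v + B * (X ∩ V1).card) +
        ∑ v ∈ X ∩ V2, w2 v := by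
      rw [Finset.sum_add_distrib, Finset.sum_add_distrib]
      congr 1
      congr 1
      · exact Finset.sum_ite_eq' X z (fun _ => Z)
      · rw [Finset.sum_ite_mem, Finset.sum_add_distrib, Finset.mul_sum, Finset.sum_const,
          smul_eq_mul, mul_comm]
      · exact Finset.sum_ite_mem X V2 w2
    rw [hsum]
    set S1 := ∑ v ∈ X ∩ V1, w1 v with hS1def
    set S2 := ∑ v ∈ X ∩ V2, w2 v with hS2def
    set c1 := (X ∩ V1).card with hc1def
    have h1X : t1 ≤ S1 ↔ ∃ a ∈ E1, a ⊆ X ∩ V1 := h1 (X ∩ V1) Finset.inter_subset_right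
    have h2X : t2 ≤ S2 ↔ ∃ b ∈ E2, b ⊆ X ∩ V2 := h2 (X ∩ V2) Finset.inter_subset_right
    have hS1W1 : S1 ≤ W1 := Finset.sum_le_sum_of_subset Finset.inter_subset_right
    have hS2W2 : S2 ≤ W2 := Finset.sum_le_sum_of_subset Finset.inter_subset_right
    have hc1n1 : c1 ≤ n1 := Finset.card_le_card Finset.inter_subset_right
    clear_value n1 W1 W2 B A Z S1 S2 c1
    constructor
    · -- t ≤ sum → ∃ edge contained in X
      intro hts
      by_cases hcase1 : z ∈ X ∧ t1 ≤ S1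
      · obtain ⟨a, haE1, haX⟩ := h1X.mp hcase1.2
        obtain ⟨e, he, rfl⟩ := Finset.mem_image.mp haE1
        rw [Finset.mem_filter] at he
        refine ⟨e, he.1, fun x hx => ?_⟩
        by_cases hxz : x = z
        · exact hxz ▸ hcase1.1
        · have : x ∈ e \ {z} := Finset.mem_sdiff.mpr ⟨hx, by simpa using hxz⟩
          exact (Finset.mem_inter.mp (haX this)).1
      by_cases hcase2 : V1 ⊆ X ∧ t2 ≤ S2
      · obtain ⟨b, hbE2, hbX⟩ := h2X.mp hcase2.2
        obtain ⟨f, hf, rfl⟩ := Finset.mem_image.mp hbE2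
        rw [Finset.mem_filter] at hf
        refine ⟨f, hf.1, fun x hx => ?_⟩
        by_cases hxV1 : x ∈ V1
        · exact hcase2.1 hxV1
        · have : x ∈ f \ V1 := Finset.mem_sdiff.mpr ⟨hx, hxV1⟩
          exact (Finset.mem_inter.mp (hbX this)).1
      exfalso
      -- show the sum is < t
      push_neg at hcase1 hcase2
      by_cases hzX : z ∈ X
      · have hS1lt : S1 + 1 ≤ t1 := by
          have := hcase1 hzX; omega
        have hV1X : ¬ V1 ⊆ X := by
          intro hsub
          have : X ∩ V1 = V1 := Finset.inter_eq_right.mpr hsub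
          rw [hS1def, this] at hS1lt
          rw [hW1def] at hd
          omega
        have hss : X ∩ V1 ⊂ V1 := by
          refine Finset.ssubset_iff_subset_ne.mpr ⟨Finset.inter_subset_right, ?_⟩
          intro hcon
          exact hV1X (Finset.inter_eq_right.mp hcon)
        have hc1lt : c1 + 1 ≤ n1 := by
          rw [hc1def, hn1def]; exact Finset.card_lt_card hss
        rw [if_pos hzX] at hts
        have hm1 : A * (S1 + 1) ≤ A * t1 := Nat.mul_le_mul_left A hS1lt
        have hm2 : B * (c1 + 1) ≤ B * n1 := Nat.mul_le_mul_left B hc1lt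
        rw [Nat.mul_add, Nat.mul_one] at hm1 hm2
        have hAeq : A = B * n1 + B := by rw [hAdef]; ring
        rw [hZdef] at hts
        -- hts : A*t1 + (A*d + B*n1 + t2) ≤ Z + (A*S1 + B*c1) + S2 with Z = A*d+B*n1+t2
        linarith [hts, hm1, hm2, hS2W2, hAeq, hBdef]
      · rw [if_neg hzX] at hts
        by_cases hV1X : V1 ⊆ X
        · have hXV1 : X ∩ V1 = V1 := Finset.inter_eq_right.mpr hV1X
          have hS1eq : S1 = W1 := by rw [hS1def, hXV1, hW1def]
          have hc1eq : c1 = n1 := by rw [hc1def, hXV1, hn1def]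
          have hS2lt : S2 + 1 ≤ t2 := by have := hcase2 hV1X; omega
          rw [hS1eq, hd, hc1eq, hZdef, Nat.mul_add] at hts
          linarith [hts, hS2lt]
        · have hss : X ∩ V1 ⊂ V1 := by
            refine Finset.ssubset_iff_subset_ne.mpr ⟨Finset.inter_subset_right, ?_⟩
            intro hcon
            exact hV1X (Finset.inter_eq_right.mp hcon)
          have hc1lt : c1 + 1 ≤ n1 := by
            rw [hc1def, hn1def]; exact Finset.card_lt_card hss
          have hm1 : A * S1 ≤ A * (t1 + d) := Nat.mul_le_mul_left A (hd ▸ hS1W1)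
          have hm2 : B * (c1 + 1) ≤ B * n1 := Nat.mul_le_mul_left B hc1lt
          rw [Nat.mul_add] at hm1
          rw [Nat.mul_add, Nat.mul_one] at hm2
          rw [hZdef] at hts
          linarith [hts, hm1, hm2, hS2W2, hBdef]
    · -- ∃ edge contained in X → t ≤ sum
      rintro ⟨e, he, heX⟩
      by_cases hze : z ∈ e
      · have hzX : z ∈ X := heX hze
        have hezE1 : e \ {z} ∈ E1 := by
          rw [hE1def, Finset.mem_image]
          exact ⟨e, Finset.mem_filter.mpr ⟨he, hze⟩, rfl⟩
        have ht1S1 : t1 ≤ S1 := by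
          apply h1X.mpr
          refine ⟨e \ {z}, hezE1, fun x hx => ?_⟩
          rw [Finset.mem_sdiff, Finset.mem_singleton] at hx
          exact Finset.mem_inter.mpr ⟨heX hx.1, hE1sub _ hezE1 (Finset.mem_sdiff.mpr ⟨hx.1, by simpa using hx.2⟩)⟩
        rw [if_pos hzX]
        have hm1 : A * t1 ≤ A * S1 := Nat.mul_le_mul_left A ht1S1
        linarith [hm1, Nat.zero_le (B * c1), Nat.zero_le S2]
      · have hV1e : V1 ⊆ e := hV1f e he hze
        have hV1X : V1 ⊆ X := hV1e.trans heX
        have hXV1 : X ∩ V1 = V1 := Finset.inter_eq_right.mpr hV1X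
        have hS1eq : S1 = W1 := by rw [hS1def, hXV1, hW1def]
        have hc1eq : c1 = n1 := by rw [hc1def, hXV1, hn1def]
        have heVE2 : e \ V1 ∈ E2 := by
          rw [hE2def, Finset.mem_image]
          exact ⟨e, Finset.mem_filter.mpr ⟨he, hze⟩, rfl⟩
        have ht2S2 : t2 ≤ S2 := by
          apply h2X.mpr
          refine ⟨e \ V1, heVE2, fun x hx => ?_⟩
          have hx' := Finset.mem_sdiff.mp hx
          exact Finset.mem_inter.mpr ⟨heX hx'.1, hE2sub _ heVE2 hx⟩
        rw [hS1eq, hd, hc1eq, hZdef, Nat.mul_add]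
        by_cases hzX : z ∈ X
        · rw [if_pos hzX]
          linarith [ht2S2, Nat.zero_le (A * d), Nat.zero_le (B * n1), Nat.zero_le (A * t1)]
        · rw [if_neg hzX]
          linarith [ht2S2, Nat.zero_le (A * d), Nat.zero_le (B * n1), Nat.zero_le (A * t1)]

theorem stmt_8 {α : Type*} [DecidableEq α] (V : Finset α) (E : Finset (Finset α))
    (hE : ∀ e ∈ E, e ⊆ V) (h : OneSperner E) :
    ∃ w : α → ℕ, ∃ t : ℕ, ∀ X ⊆ V, (t ≤ ∑ v ∈ X, w v ↔ ∃ e ∈ E, e ⊆ X) := by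
  exact main_aux V.card V E (le_refl _) hE h
end

section
/- Every 1-Sperner hypergraph is equilizable: if H = (V, E) is a hypergraph such that every two distinct hyperedges e, f ∈ E satisfy min(|e \ f|, |f \ e|) = 1, then there exist a weight function w : V → ℕ and a threshold t ∈ ℕ such that for every subset X ⊆ V, ∑_{v ∈ X} w(v) = t if and only if X ∈ E. -/
open Finset

lemma kadd_aux {K x y r s : ℕ} (hr : r < K) (hs : s < K) :
    K * x + r = K * y + s ↔ x = y ∧ r = s := by
  constructor
  · intro h
    have hxy : x = y := by
      rcases Nat.lt_trichotomy x y with hl | he | hl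
      · exfalso
        have h1 : K * (x + 1) ≤ K * y := Nat.mul_le_mul_left K hl
        have h2 : K * (x + 1) = K * x + K := by ring
        omega
      · exact he
      · exfalso
        have h1 : K * (y + 1) ≤ K * x := Nat.mul_le_mul_left K hl
        have h2 : K * (y + 1) = K * y + K := by ring
        omega
    subst hxy
    omega
  · rintro ⟨rfl, rfl⟩; rfl

lemma sum_subset_eq_of_pos {α : Type*} [DecidableEq α] {X A : Finset α} {w : α → ℕ}
    (hXA : X ⊆ A) (hpos : ∀ v ∈ A, 0 < w v)
    (h : ∑ v ∈ X, w v = ∑ v ∈ A, w v) : X = A := by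
  have hsd : ∑ v ∈ A \ X, w v + ∑ v ∈ X, w v = ∑ v ∈ A, w v :=
    Finset.sum_sdiff hXA
  have h0 : ∑ v ∈ A \ X, w v = 0 := by omega
  have hempty : A \ X = ∅ := by
    by_contra hne
    obtain ⟨v, hv⟩ := Finset.nonempty_of_ne_empty hne
    have hvA : v ∈ A := (Finset.mem_sdiff.mp hv).1
    have := Finset.sum_eq_zero_iff.mp h0 v hv
    have := hpos v hvA
    omega
  exact Finset.Subset.antisymm hXA (fun v hv => by
    by_contra hvX
    exact absurd (Finset.mem_sdiff.mpr ⟨hv, hvX⟩) (by simp [hempty]))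

lemma sd_card_one {α : Type*} [DecidableEq α] {E : Finset (Finset α)}
    (hS : OneSperner E) {e g : Finset α} (he : e ∈ E) (hg : g ∈ E)
    (hne : e ≠ g) (hc : e.card ≤ g.card) : (e \ g).card = 1 := by
  have h := hS e he g hg hne
  have h1 := Finset.card_inter_add_card_sdiff e g
  have h2 := Finset.card_inter_add_card_sdiff g e
  have h3 : (e ∩ g).card = (g ∩ e).card := by rw [Finset.inter_comm]
  omega

lemma key_struct {α : Type*} [DecidableEq α] {E : Finset (Finset α)} (hS : OneSperner E)
    {f g : Finset α} (hf : f ∈ E) (hg : g ∈ E) (hfg : f ≠ g)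
    (hfmin : ∀ e ∈ E, f.card ≤ e.card) (hgmax : ∀ e ∈ E, e ≠ f → e.card ≤ g.card)
    {z : α} (hzf : z ∈ f) (hzg : z ∉ g) :
    ∀ e ∈ E, z ∈ e → ∀ h ∈ E, z ∉ h → e \ {z} ⊆ h := by
  have hsubg : ∀ e ∈ E, z ∈ e → e \ {z} ⊆ g := by
    intro e he hze
    have heg : e ≠ g := fun h => hzg (h ▸ hze)
    have hcard : e.card ≤ g.card := by
      by_cases hef : e = f
      · exact hef ▸ hfmin g hg
      · exact hgmax e he hef
    have h1 : (e \ g).card = 1 := sd_card_one hS he hg heg hcard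
    have hzeg : z ∈ e \ g := Finset.mem_sdiff.mpr ⟨hze, hzg⟩
    have heq : e \ g = {z} := by
      obtain ⟨x, hx⟩ := Finset.card_eq_one.mp h1
      rw [hx] at hzeg ⊢
      rw [Finset.mem_singleton.mp hzeg]
    intro x hx
    obtain ⟨hxe, hxz⟩ := Finset.mem_sdiff.mp hx
    by_contra hxg
    have : x ∈ e \ g := Finset.mem_sdiff.mpr ⟨hxe, hxg⟩
    rw [heq] at this
    exact hxz this
  have hfsub : ∀ h ∈ E, z ∉ h → f \ {z} ⊆ h := by
    intro h hh hzh
    have hfh : f ≠ h := fun he => hzh (he ▸ hzf)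
    have h1 : (f \ h).card = 1 := sd_card_one hS hf hh hfh (hfmin h hh)
    have hzfh : z ∈ f \ h := Finset.mem_sdiff.mpr ⟨hzf, hzh⟩
    have heq : f \ h = {z} := by
      obtain ⟨x, hx⟩ := Finset.card_eq_one.mp h1
      rw [hx] at hzfh ⊢
      rw [Finset.mem_singleton.mp hzfh]
    intro x hx
    obtain ⟨hxf, hxz⟩ := Finset.mem_sdiff.mp hx
    by_contra hxh
    have : x ∈ f \ h := Finset.mem_sdiff.mpr ⟨hxf, hxh⟩
    rw [heq] at this
    exact hxz this
  intro e he hze h hh hzh x hx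
  obtain ⟨hxe, hxz'⟩ := Finset.mem_sdiff.mp hx
  have hxz : x ≠ z := by simpa using hxz'
  by_contra hxh
  have hef : e ≠ f := by
    rintro rfl
    exact hxh (hfsub h hh hzh hx)
  have hhg : h ≠ g := by
    rintro rfl
    exact hxh (hsubg e he hze hx)
  have hxg : x ∈ g := hsubg e he hze hx
  have heh : e ≠ h := fun h' => hzh (h' ▸ hze)
  have h2 : 2 ≤ (e \ h).card := by
    have hs : ({x, z} : Finset α) ⊆ e \ h := by
      intro y hy
      rcases Finset.mem_insert.mp hy with rfl | hy
      · exact Finset.mem_sdiff.mpr ⟨hxe, hxh⟩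
      · rw [Finset.mem_singleton.mp hy]
        exact Finset.mem_sdiff.mpr ⟨hze, hzh⟩
    calc 2 = ({x, z} : Finset α).card := by
          rw [Finset.card_insert_of_notMem (by simpa using hxz), Finset.card_singleton]
    _ ≤ (e \ h).card := Finset.card_le_card hs
  have hhe1 : (h \ e).card = 1 := by
    have := hS e he h hh heh
    omega
  have hfe : f ≠ e := Ne.symm hef
  have hfe1 : (f \ e).card = 1 := sd_card_one hS hf he hfe (hfmin e he)
  obtain ⟨y, hy⟩ := Finset.card_eq_one.mp hfe1
  have hyfe : y ∈ f \ e := by rw [hy]; exact Finset.mem_singleton_self y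
  obtain ⟨hyf, hye⟩ := Finset.mem_sdiff.mp hyfe
  have hynez : y ≠ z := fun h' => hye (h' ▸ hze)
  have hyh : y ∈ h := hfsub h hh hzh (Finset.mem_sdiff.mpr ⟨hyf, by simpa using hynez⟩)
  have hyg : y ∈ g := hsubg f hf hzf (Finset.mem_sdiff.mpr ⟨hyf, by simpa using hynez⟩)
  have hhey : h \ e = {y} := by
    obtain ⟨v, hv⟩ := Finset.card_eq_one.mp hhe1
    have : y ∈ h \ e := Finset.mem_sdiff.mpr ⟨hyh, hye⟩
    rw [hv] at this ⊢
    rw [← Finset.mem_singleton.mp this]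
  have hhgne : (h \ g).Nonempty := by
    rw [Finset.sdiff_nonempty]
    intro hsub
    have h1 := hS h hh g hg hhg
    have h2 : (h \ g).card = 0 := by
      rw [Finset.card_eq_zero, Finset.sdiff_eq_empty_iff_subset]
      exact hsub
    omega
  obtain ⟨u, hu⟩ := hhgne
  obtain ⟨huh, hug⟩ := Finset.mem_sdiff.mp hu
  have huy : u ≠ y := fun h' => hug (h' ▸ hyg)
  have hue : u ∈ e := by
    by_contra hue
    have : u ∈ h \ e := Finset.mem_sdiff.mpr ⟨huh, hue⟩
    rw [hhey] at this
    exact huy (Finset.mem_singleton.mp this)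
  have huz : u ≠ z := fun h' => hzh (h' ▸ huh)
  have : u ∈ g := hsubg e he hze (Finset.mem_sdiff.mpr ⟨hue, by simpa using huz⟩)
  exact hug this

lemma single_case {α : Type*} [DecidableEq α] (V : Finset α) (e : Finset α) :
    ∃ w : α → ℕ, ∃ t : ℕ, (∀ v ∈ V, 0 < w v) ∧
      ∀ X ⊆ V, ((∑ v ∈ X, w v) = t ↔ X ∈ ({e} : Finset (Finset α))) := by
  refine ⟨fun v => if v ∈ e then 1 else e.card + 1, e.card, ?_, ?_⟩
  · intro v _; simp only; split <;> omega
  · intro X _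
    have hsplit : ∑ v ∈ X, (fun v => if v ∈ e then 1 else e.card + 1) v
        = (X ∩ e).card * 1 + (X \ e).card * (e.card + 1) := by
      rw [← Finset.sum_inter_add_sum_sdiff X e]
      congr 1
      · rw [Finset.sum_congr rfl (fun v hv => if_pos (Finset.mem_inter.mp hv).2),
          Finset.sum_const, smul_eq_mul]
      · rw [Finset.sum_congr rfl (fun v hv => if_neg (Finset.mem_sdiff.mp hv).2),
          Finset.sum_const, smul_eq_mul]
    rw [hsplit, Finset.mem_singleton]
    constructor
    · intro h
      have hXe : (X ∩ e).card ≤ e.card := Finset.card_le_card Finset.inter_subset_right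
      have hd0 : (X \ e).card = 0 := by
        rcases Nat.eq_zero_or_pos (X \ e).card with h0 | hpos
        · exact h0
        · exfalso
          have : e.card + 1 ≤ (X \ e).card * (e.card + 1) := Nat.le_mul_of_pos_left _ hpos
          omega
      have hXsub : X ⊆ e := by
        rw [← Finset.sdiff_eq_empty_iff_subset]
        exact Finset.card_eq_zero.mp hd0
      have hXi : X ∩ e = X := Finset.inter_eq_left.mpr hXsub
      rw [hXi, hd0] at h
      exact Finset.eq_of_subset_of_card_le hXsub (by omega)
    · intro h
      rw [h, Finset.inter_self, Finset.sdiff_self]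
      simp

lemma aux_main {α : Type*} [DecidableEq α] :
    ∀ (n : ℕ) (E : Finset (Finset α)) (V : Finset α), E.card ≤ n →
      (∀ e ∈ E, e ⊆ V) → OneSperner E →
      ∃ w : α → ℕ, ∃ t : ℕ, (∀ v ∈ V, 0 < w v) ∧
        ∀ X ⊆ V, ((∑ v ∈ X, w v) = t ↔ X ∈ E) := by
  intro n
  induction n with
  | zero =>
    intro E V hcard hE hS
    have hE0 : E = ∅ := Finset.card_eq_zero.mp (Nat.le_zero.mp hcard)
    subst hE0
    refine ⟨fun _ => 1, V.card + 1, by simp, ?_⟩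
    intro X hX
    simp only [Finset.sum_const, smul_eq_mul, mul_one, Finset.notMem_empty, iff_false]
    have := Finset.card_le_card hX
    omega
  | succ n ih =>
    intro E V hcard hE hS
    rcases Nat.lt_or_ge E.card 2 with hlt | hge
    · -- |E| ≤ 1
      interval_cases h : E.card
      · have hE0 : E = ∅ := Finset.card_eq_zero.mp h
        subst hE0
        refine ⟨fun _ => 1, V.card + 1, by simp, ?_⟩
        intro X hX
        simp only [Finset.sum_const, smul_eq_mul, mul_one, Finset.notMem_empty, iff_false]
        have := Finset.card_le_card hX
        omega
      · obtain ⟨e, rfl⟩ := Finset.card_eq_one.mp h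
        exact single_case V e
    · -- |E| ≥ 2
      obtain ⟨f, hf, hfmin⟩ := Finset.exists_min_image E Finset.card
        (Finset.card_pos.mp (by omega))
      have herase : (E.erase f).Nonempty := by
        rw [← Finset.card_pos, Finset.card_erase_of_mem hf]; omega
      obtain ⟨g, hg', hgmax'⟩ := Finset.exists_max_image (E.erase f) Finset.card herase
      have hg : g ∈ E := Finset.mem_of_mem_erase hg'
      have hfg : f ≠ g := fun h => (Finset.mem_erase.mp hg').1 h.symm
      have hgmax : ∀ e ∈ E, e ≠ f → e.card ≤ g.card := fun e he hne =>
        hgmax' e (Finset.mem_erase.mpr ⟨hne, he⟩)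
      have hfg1 : (f \ g).card = 1 := sd_card_one hS hf hg hfg (hfmin g hg)
      obtain ⟨z, hz⟩ := Finset.card_eq_one.mp hfg1
      have hzfg : z ∈ f \ g := by rw [hz]; exact Finset.mem_singleton_self z
      obtain ⟨hzf, hzg⟩ := Finset.mem_sdiff.mp hzfg
      have kp := key_struct hS hf hg hfg hfmin hgmax hzf hzg
      set E1' := E.filter (fun e => z ∈ e) with hE1'
      set E2' := E.filter (fun e => z ∉ e) with hE2'
      set A := E1'.sup (fun e => e \ {z}) with hAdef
      have hk1 : ∀ e ∈ E, z ∈ e → e \ {z} ⊆ A := by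
        intro e he hze
        have hmem : e ∈ E1' := by rw [hE1']; exact Finset.mem_filter.mpr ⟨he, hze⟩
        exact Finset.le_sup (f := fun e => e \ {z}) hmem
      have hk2 : ∀ h ∈ E, z ∉ h → A ⊆ h := fun h hh hzh =>
        Finset.sup_le (fun e he =>
          kp e (Finset.mem_filter.mp he).1 (Finset.mem_filter.mp he).2 h hh hzh)
      have hzA : z ∉ A := by
        intro hzA
        obtain ⟨e, he, hze⟩ := Finset.mem_sup.mp hzA
        exact (Finset.mem_sdiff.mp hze).2 (Finset.mem_singleton_self z)
      have hAV : A ⊆ V := by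
        intro x hx
        obtain ⟨e, he, hxe⟩ := Finset.mem_sup.mp hx
        exact hE e (Finset.mem_filter.mp he).1 (Finset.mem_sdiff.mp hxe).1
      have hzV : z ∈ V := hE f hf hzf
      set V₂ := V \ insert z A with hV₂
      set E1 := E1'.image (fun e => e \ {z}) with hE1def
      set E2 := E2'.image (fun e => e \ A) with hE2def
      have hcard1 : E1.card ≤ n := by
        have h1 : E1.card ≤ E1'.card := Finset.card_image_le
        have h2 : E1' ⊂ E := Finset.filter_ssubset.mpr ⟨g, hg, by simp [hzg]⟩
        have := Finset.card_lt_card h2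
        omega
      have hcard2 : E2.card ≤ n := by
        have h1 : E2.card ≤ E2'.card := Finset.card_image_le
        have h2 : E2' ⊂ E := Finset.filter_ssubset.mpr ⟨f, hf, by simp [hzf]⟩
        have := Finset.card_lt_card h2
        omega
      have hE1sub : ∀ e ∈ E1, e ⊆ A := by
        intro e he
        obtain ⟨e0, he0, rfl⟩ := Finset.mem_image.mp he
        exact hk1 e0 (Finset.mem_filter.mp he0).1 (Finset.mem_filter.mp he0).2
      have hE2sub : ∀ e ∈ E2, e ⊆ V₂ := by
        intro e he
        obtain ⟨e0, he0, rfl⟩ := Finset.mem_image.mp he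
        obtain ⟨he0E, hze0⟩ := Finset.mem_filter.mp he0
        intro x hx
        obtain ⟨hxe0, hxA⟩ := Finset.mem_sdiff.mp hx
        refine Finset.mem_sdiff.mpr ⟨hE e0 he0E hxe0, ?_⟩
        simp only [Finset.mem_insert]
        rintro (rfl | hxA')
        exacts [hze0 hxe0, hxA hxA']
      have hS1 : OneSperner E1 := by
        intro e' he' f' hf' hne
        obtain ⟨e0, he0, rfl⟩ := Finset.mem_image.mp he'
        obtain ⟨f0, hf0, rfl⟩ := Finset.mem_image.mp hf'
        obtain ⟨he0E, hze0⟩ := Finset.mem_filter.mp he0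
        obtain ⟨hf0E, hzf0⟩ := Finset.mem_filter.mp hf0
        have hne0 : e0 ≠ f0 := by rintro rfl; exact hne rfl
        have hd : ∀ a b : Finset α, z ∈ b → (a \ {z}) \ (b \ {z}) = a \ b := by
          intro a b hzb
          ext x
          simp only [Finset.mem_sdiff, Finset.mem_singleton]
          constructor
          · rintro ⟨⟨hxa, hxz⟩, hn⟩
            exact ⟨hxa, fun hxb => hn ⟨hxb, hxz⟩⟩
          · rintro ⟨hxa, hxb⟩
            exact ⟨⟨hxa, fun h => hxb (h ▸ hzb)⟩, fun h => hxb h.1⟩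
        rw [hd e0 f0 hzf0, hd f0 e0 hze0]
        exact hS e0 he0E f0 hf0E hne0
      have hS2 : OneSperner E2 := by
        intro e' he' f' hf' hne
        obtain ⟨e0, he0, rfl⟩ := Finset.mem_image.mp he'
        obtain ⟨f0, hf0, rfl⟩ := Finset.mem_image.mp hf'
        obtain ⟨he0E, hze0⟩ := Finset.mem_filter.mp he0
        obtain ⟨hf0E, hzf0⟩ := Finset.mem_filter.mp hf0
        have hne0 : e0 ≠ f0 := by rintro rfl; exact hne rfl
        have hd : ∀ a b : Finset α, A ⊆ b → (a \ A) \ (b \ A) = a \ b := by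
          intro a b hAb
          ext x
          simp only [Finset.mem_sdiff]
          constructor
          · rintro ⟨⟨hxa, hxA⟩, hn⟩
            exact ⟨hxa, fun hxb => hn ⟨hxb, hxA⟩⟩
          · rintro ⟨hxa, hxb⟩
            exact ⟨⟨hxa, fun h => hxb (hAb h)⟩, fun h => hxb h.1⟩
        rw [hd e0 f0 (hk2 f0 hf0E hzf0), hd f0 e0 (hk2 e0 he0E hze0)]
        exact hS e0 he0E f0 hf0E hne0
      obtain ⟨w1, t1, hpos1, hiff1⟩ := ih E1 A hcard1 hE1sub hS1
      obtain ⟨w2, t2, hpos2, hiff2⟩ := ih E2 V₂ hcard2 hE2sub hS2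
      set T1 := ∑ v ∈ A, w1 v with hT1
      set S2 := ∑ v ∈ V₂, w2 v with hS2sum
      set K := S2 + t2 + 1 with hK
      have hfz1 : f \ {z} ∈ E1 :=
        Finset.mem_image.mpr ⟨f, Finset.mem_filter.mpr ⟨hf, hzf⟩, rfl⟩
      have ht1 : t1 ≤ T1 := by
        have h1 : (∑ v ∈ f \ {z}, w1 v) = t1 := (hiff1 _ (hE1sub _ hfz1)).mpr hfz1
        rw [← h1, hT1]
        exact Finset.sum_le_sum_of_subset (hE1sub _ hfz1)
      have hgA : g \ A ∈ E2 :=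
        Finset.mem_image.mpr ⟨g, Finset.mem_filter.mpr ⟨hg, hzg⟩, rfl⟩
      have ht2 : t2 ≤ S2 := by
        have h1 : (∑ v ∈ g \ A, w2 v) = t2 := (hiff2 _ (hE2sub _ hgA)).mpr hgA
        rw [← h1, hS2sum]
        exact Finset.sum_le_sum_of_subset (hE2sub _ hgA)
      obtain ⟨c, hc⟩ : ∃ c, T1 = t1 + c := ⟨T1 - t1, by omega⟩
      set D := K * c + t2 with hDdef
      have hDpos : 0 < D := by
        by_contra hD0
        push_neg at hD0
        have hKpos : 0 < K := by omega
        have hc0 : c = 0 := by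
          rcases Nat.eq_zero_or_pos c with h | h
          · exact h
          · exfalso
            have h1 : K * 1 ≤ K * c := Nat.mul_le_mul_left K h
            omega
        have ht20 : t2 = 0 := by
          rw [hDdef, hc0] at hD0
          omega
        have hem : (∅ : Finset α) ∈ E2 :=
          (hiff2 ∅ (Finset.empty_subset _)).mp (by simp [ht20])
        obtain ⟨h0, hh0, hh0e⟩ := Finset.mem_image.mp hem
        obtain ⟨hh0E, hzh0⟩ := Finset.mem_filter.mp hh0
        have hh0A : h0 = A :=
          Finset.Subset.antisymm (Finset.sdiff_eq_empty_iff_subset.mp hh0e)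
            (hk2 h0 hh0E hzh0)
        have hAE1 : A ∈ E1 := by
          refine (hiff1 A (Finset.Subset.refl A)).mp ?_
          rw [← hT1]
          omega
        obtain ⟨e0, he0, he0A⟩ := Finset.mem_image.mp hAE1
        obtain ⟨he0E, hze0⟩ := Finset.mem_filter.mp he0
        have hins : insert z A = e0 := by
          rw [← he0A]
          ext x
          by_cases hxz : x = z <;> simp [hxz, hze0]
        have hneq : A ≠ insert z A := by
          intro h
          exact hzA (h ▸ Finset.mem_insert_self z A)
        have hmin := hS A (hh0A ▸ hh0E) (insert z A) (hins ▸ he0E) hneq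
        have hds : A \ insert z A = ∅ :=
          Finset.sdiff_eq_empty_iff_subset.mpr (Finset.subset_insert z A)
        rw [hds] at hmin
        simp at hmin
      set w := fun v => if v = z then D else if v ∈ A then K * w1 v else w2 v with hw
      refine ⟨w, K * T1 + t2, ?_, ?_⟩
      · intro v hv
        by_cases h1 : v = z
        · simp [hw, h1, hDpos]
        · by_cases h2 : v ∈ A
          · simp only [hw, if_neg h1, if_pos h2]
            exact Nat.mul_pos (by omega) (hpos1 v h2)
          · have hvV2 : v ∈ V₂ := Finset.mem_sdiff.mpr ⟨hv, by simp [h1, h2]⟩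
            simp only [hw, if_neg h1, if_neg h2]
            exact hpos2 v hvV2
      · intro X hX
        set Xa := X ∩ A with hXadef
        set X2 := X \ insert z A with hX2def
        have hX2V : X2 ⊆ V₂ := Finset.sdiff_subset_sdiff hX (Finset.Subset.refl _)
        have ha : ∑ v ∈ Xa, w1 v ≤ T1 := by
          rw [hT1]
          exact Finset.sum_le_sum_of_subset Finset.inter_subset_right
        have hb : ∑ v ∈ X2, w2 v ≤ S2 := by
          rw [hS2sum]
          exact Finset.sum_le_sum_of_subset hX2V
        have hsum : ∑ v ∈ X, w v
            = (if z ∈ X then D else 0) + K * (∑ v ∈ Xa, w1 v) + ∑ v ∈ X2, w2 v := by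
          rw [← Finset.sum_inter_add_sum_sdiff X (insert z A)]
          have hdisj : Disjoint (X ∩ {z}) Xa := by
            rw [Finset.disjoint_left]
            intro x hx hx2
            have hxz : x = z := by simpa using (Finset.mem_inter.mp hx).2
            exact hzA (hxz ▸ (Finset.mem_inter.mp hx2).2)
          have hsplit2 : X ∩ insert z A = (X ∩ {z}) ∪ Xa := by
            ext x
            simp only [Finset.mem_inter, Finset.mem_insert, Finset.mem_union,
              Finset.mem_singleton, hXadef]
            tauto
          have h1 : ∑ v ∈ X ∩ insert z A, w v
              = (∑ v ∈ X ∩ {z}, w v) + ∑ v ∈ Xa, w v := by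
            rw [hsplit2, Finset.sum_union hdisj]
          have h2 : ∑ v ∈ X ∩ {z}, w v = if z ∈ X then D else 0 := by
            by_cases hzX : z ∈ X
            · have : X ∩ {z} = {z} :=
                Finset.inter_eq_right.mpr (Finset.singleton_subset_iff.mpr hzX)
              rw [this, Finset.sum_singleton, if_pos hzX, hw]
              simp
            · have : X ∩ {z} = ∅ := by
                rw [Finset.eq_empty_iff_forall_notMem]
                intro x hx
                obtain ⟨hx1, hx2⟩ := Finset.mem_inter.mp hx
                exact hzX ((Finset.mem_singleton.mp hx2) ▸ hx1)
              rw [this, Finset.sum_empty, if_neg hzX]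
            
          have h3 : ∑ v ∈ Xa, w v = K * ∑ v ∈ Xa, w1 v := by
            rw [Finset.mul_sum]
            apply Finset.sum_congr rfl
            intro v hv
            have hvA : v ∈ A := (Finset.mem_inter.mp hv).2
            have hvz : v ≠ z := fun h => hzA (h ▸ hvA)
            simp [hw, hvz, hvA]
          have h4 : ∑ v ∈ X2, w v = ∑ v ∈ X2, w2 v := by
            apply Finset.sum_congr rfl
            intro v hv
            obtain ⟨hvX, hvP⟩ := Finset.mem_sdiff.mp hv
            simp only [Finset.mem_insert, not_or] at hvP
            simp [hw, hvP.1, hvP.2]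
          rw [h1, h2, h3, h4]
        rw [hsum]
        by_cases hzX : z ∈ X
        · rw [if_pos hzX]
          have hrew : D + K * (∑ v ∈ Xa, w1 v) + ∑ v ∈ X2, w2 v
              = K * (c + ∑ v ∈ Xa, w1 v) + (t2 + ∑ v ∈ X2, w2 v) := by
            rw [hDdef]; ring
          have hrb : t2 + ∑ v ∈ X2, w2 v < K := by omega
          have hrt : t2 < K := by omega
          rw [hrew, hc, kadd_aux hrb hrt]
          constructor
          · rintro ⟨h1, h2⟩
            have ha1 : ∑ v ∈ Xa, w1 v = t1 := by omega
            have hb0 : ∑ v ∈ X2, w2 v = 0 := by omega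
            have hX2e : X2 = ∅ := by
              rw [Finset.eq_empty_iff_forall_notMem]
              intro x hx
              have h5 := Finset.sum_eq_zero_iff.mp hb0 x hx
              have h6 := hpos2 x (hX2V hx)
              omega
            have hXaE : Xa ∈ E1 := (hiff1 Xa Finset.inter_subset_right).mp ha1
            obtain ⟨e0, he0, he0X⟩ := Finset.mem_image.mp hXaE
            obtain ⟨he0E, hze0⟩ := Finset.mem_filter.mp he0
            have hXeq : X = e0 := by
              ext x
              constructor
              · intro hx
                by_cases hxz : x = z
                · exact hxz ▸ hze0
                · have hxA : x ∈ A := by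
                    by_contra hxA
                    have : x ∈ X2 := Finset.mem_sdiff.mpr ⟨hx, by simp [hxz, hxA]⟩
                    rw [hX2e] at this
                    simp at this
                  have hxXa : x ∈ Xa := Finset.mem_inter.mpr ⟨hx, hxA⟩
                  rw [← he0X] at hxXa
                  exact (Finset.mem_sdiff.mp hxXa).1
              · intro hx
                by_cases hxz : x = z
                · exact hxz ▸ hzX
                · have : x ∈ e0 \ {z} := Finset.mem_sdiff.mpr ⟨hx, by simp [hxz]⟩
                  rw [he0X] at this
                  exact (Finset.mem_inter.mp this).1
            rw [hXeq]
            exact he0E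
          · intro hXE
            have hXzA : X \ {z} ⊆ A := hk1 X hXE hzX
            have hXaeq : Xa = X \ {z} := by
              ext x
              simp only [hXadef, Finset.mem_inter, Finset.mem_sdiff, Finset.mem_singleton]
              constructor
              · rintro ⟨h1, h2⟩
                exact ⟨h1, fun h => hzA (h ▸ h2)⟩
              · rintro ⟨h1, h2⟩
                exact ⟨h1, hXzA (Finset.mem_sdiff.mpr ⟨h1, by simp [h2]⟩)⟩
            have hX2e : X2 = ∅ := by
              rw [Finset.eq_empty_iff_forall_notMem]
              intro x hx
              obtain ⟨hxX, hxP⟩ := Finset.mem_sdiff.mp hx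
              simp only [Finset.mem_insert, not_or] at hxP
              exact hxP.2 (hXzA (Finset.mem_sdiff.mpr ⟨hxX, by simp [hxP.1]⟩))
            have hXaE1 : X \ {z} ∈ E1 :=
              Finset.mem_image.mpr ⟨X, Finset.mem_filter.mpr ⟨hXE, hzX⟩, rfl⟩
            have ha1 : ∑ v ∈ Xa, w1 v = t1 := by
              rw [hXaeq]
              exact (hiff1 _ hXzA).mpr hXaE1
            have hb0 : ∑ v ∈ X2, w2 v = 0 := by rw [hX2e]; simp
            constructor <;> omega
        · rw [if_neg hzX, Nat.zero_add]
          have hrb : ∑ v ∈ X2, w2 v < K := by omega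
          have hrt : t2 < K := by omega
          rw [kadd_aux hrb hrt]
          constructor
          · rintro ⟨h1, h2⟩
            have hXaA : Xa = A := by
              apply sum_subset_eq_of_pos Finset.inter_subset_right hpos1
              rw [h1, hT1]
            have hX2E : X2 ∈ E2 := (hiff2 X2 hX2V).mp h2
            obtain ⟨h0, hh0, hh0X⟩ := Finset.mem_image.mp hX2E
            obtain ⟨hh0E, hzh0⟩ := Finset.mem_filter.mp hh0
            have hAh0 : A ⊆ h0 := hk2 h0 hh0E hzh0
            have hXeq : X = h0 := by
              ext x
              constructor
              · intro hx
                by_cases hxA : x ∈ A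
                · exact hAh0 hxA
                · have hxz : x ≠ z := fun h => hzX (h ▸ hx)
                  have : x ∈ X2 := Finset.mem_sdiff.mpr ⟨hx, by simp [hxz, hxA]⟩
                  rw [← hh0X] at this
                  exact (Finset.mem_sdiff.mp this).1
              · intro hx
                by_cases hxA : x ∈ A
                · rw [← hXaA] at hxA
                  exact (Finset.mem_inter.mp hxA).1
                · have : x ∈ h0 \ A := Finset.mem_sdiff.mpr ⟨hx, hxA⟩
                  rw [hh0X] at this
                  exact (Finset.mem_sdiff.mp this).1
            rw [hXeq]
            exact hh0E
          · intro hXE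
            have hzXE : z ∉ X := hzX
            have hAX : A ⊆ X := hk2 X hXE hzXE
            have hXaA : Xa = A := Finset.inter_eq_right.mpr hAX
            have hX2eq : X2 = X \ A := by
              ext x
              simp only [hX2def, Finset.mem_sdiff, Finset.mem_insert, not_or]
              constructor
              · rintro ⟨h1, _, h3⟩
                exact ⟨h1, h3⟩
              · rintro ⟨h1, h2⟩
                exact ⟨h1, fun h => hzX (h ▸ h1), h2⟩
            have hX2E : X2 ∈ E2 := by
              rw [hX2eq]
              exact Finset.mem_image.mpr ⟨X, Finset.mem_filter.mpr ⟨hXE, hzXE⟩, rfl⟩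
            have h2 : ∑ v ∈ X2, w2 v = t2 := (hiff2 X2 hX2V).mpr hX2E
            have h1 : ∑ v ∈ Xa, w1 v = T1 := by rw [hXaA, hT1]
            exact ⟨h1, h2⟩

theorem stmt_9 {α : Type*} [DecidableEq α] (V : Finset α) (E : Finset (Finset α))
    (hE : ∀ e ∈ E, e ⊆ V) (h : OneSperner E) :
    ∃ w : α → ℕ, ∃ t : ℕ, ∀ X ⊆ V, ((∑ v ∈ X, w v) = t ↔ X ∈ E) := by
  obtain ⟨w, t, _, hiff⟩ := aux_main E.card E V le_rfl hE h
  exact ⟨w, t, hiff⟩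
end

section
/- Let H = (V, E) be a 1-Sperner hypergraph with E ≠ {∅}. Then the characteristic vectors of the hyperedges of H are linearly independent in ℝ^V; that is, the family (χ^e)_{e ∈ E}, where χ^e : V → ℝ takes value 1 on vertices of e and 0 elsewhere, is linearly independent. -/
open Finset

lemma gram_aux {ι κ : Type*} [Fintype ι] (s : Finset κ) (c : ι → ℝ) (u : ι → κ → ℝ) :
    ∑ e : ι, ∑ f : ι, (c e * c f * ∑ k ∈ s, u e k * u f k)
      = ∑ k ∈ s, (∑ e : ι, c e * u e k) ^ 2 := by
  simp_rw [sq, Finset.sum_mul_sum, Finset.mul_sum]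
  have h1 : ∀ e : ι, ∑ f : ι, ∑ k ∈ s, c e * c f * (u e k * u f k)
      = ∑ k ∈ s, ∑ f : ι, c e * c f * (u e k * u f k) := fun e => Finset.sum_comm
  simp_rw [h1]
  rw [Finset.sum_comm]
  exact Finset.sum_congr rfl fun k _ => Finset.sum_congr rfl fun e _ =>
    Finset.sum_congr rfl fun f _ => by ring

theorem stmt_12 {α : Type*} [DecidableEq α] (V : Finset α) (E : Finset (Finset α))
    (hE : ∀ e ∈ E, e ⊆ V) (h : OneSperner E)
    (hne : E ≠ ({∅} : Finset (Finset α))) :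
    LinearIndependent ℝ
      (fun e : {e // e ∈ E} => fun v : {v // v ∈ V} =>
        if (v : α) ∈ (e : Finset α) then (1 : ℝ) else 0) := by
  classical
  rw [Fintype.linearIndependent_iff]
  intro g hg i
  -- the linear relation, pointwise
  have hpt : ∀ v : {v // v ∈ V},
      ∑ e : {e // e ∈ E}, g e * (if (v : α) ∈ (e : Finset α) then (1:ℝ) else 0) = 0 := by
    intro v
    have := congrFun hg v
    simpa [Finset.sum_apply, Pi.smul_apply, smul_eq_mul] using this
  -- no edge is empty
  have hcard : ∀ e : {e // e ∈ E}, 1 ≤ (e : Finset α).card := by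
    intro ⟨e, he⟩
    rw [Nat.one_le_iff_ne_zero, Ne, Finset.card_eq_zero]
    intro he0
    subst he0
    obtain ⟨f, hf, hfe⟩ : ∃ f ∈ E, f ≠ ∅ := by
      by_contra h'
      push_neg at h'
      exact hne (Finset.ext fun x =>
        ⟨fun hx => by simp [h' x hx], fun hx => by simpa [Finset.mem_singleton.mp hx] using he⟩)
    have := h ∅ he f hf (Ne.symm hfe)
    simp at this
  -- key identity: |e ∩ f| = min |e| |f| - 1 + [e = f]
  have hkey : ∀ e f : {e // e ∈ E},
      (((e : Finset α) ∩ (f : Finset α)).card : ℝ)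
        = ((min (e : Finset α).card (f : Finset α).card : ℕ) : ℝ) - 1
          + (if e = f then (1:ℝ) else 0) := by
    intro e f
    by_cases hef : e = f
    · subst hef
      simp
    · have hne' : (e : Finset α) ≠ (f : Finset α) := fun hh => hef (Subtype.ext hh)
      have h1 := h e e.2 f f.2 hne'
      have he' : ((e : Finset α) \ f).card + ((e : Finset α) ∩ f).card = (e : Finset α).card :=
        Finset.card_sdiff_add_card_inter _ _
      have hf' : ((f : Finset α) \ e).card + ((f : Finset α) ∩ e).card = (f : Finset α).card :=
        Finset.card_sdiff_add_card_inter _ _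
      rw [Finset.inter_comm] at hf'
      have h2 : ((e : Finset α) ∩ f).card + 1 = min (e : Finset α).card (f : Finset α).card := by
        omega
      have h3 := congrArg (Nat.cast : ℕ → ℝ) h2
      push_cast at h3
      rw [if_neg hef]
      push_cast
      linarith
  -- inner products of characteristic vectors
  have hinter : ∀ e f : {e // e ∈ E},
      ∑ v : {v // v ∈ V}, ((if (v : α) ∈ (e : Finset α) then (1:ℝ) else 0)
        * (if (v : α) ∈ (f : Finset α) then (1:ℝ) else 0))
        = (((e : Finset α) ∩ (f : Finset α)).card : ℝ) := by
    intro e f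
    rw [Finset.sum_coe_sort V (fun v => (if v ∈ (e : Finset α) then (1:ℝ) else 0)
      * (if v ∈ (f : Finset α) then (1:ℝ) else 0))]
    have hstep : ∀ v ∈ V, (if v ∈ (e : Finset α) then (1:ℝ) else 0)
        * (if v ∈ (f : Finset α) then (1:ℝ) else 0)
        = if v ∈ (e : Finset α) ∩ f then (1:ℝ) else 0 := by
      intro v _
      by_cases h1 : v ∈ (e : Finset α) <;> by_cases h2 : v ∈ (f : Finset α) <;>
        simp [h1, h2, Finset.mem_inter]
    rw [Finset.sum_congr rfl hstep, Finset.sum_ite_mem]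
    rw [Finset.inter_eq_right.mpr (fun x hx => hE _ e.2 (Finset.mem_inter.mp hx).1)]
    simp
  -- min - 1 as an inner product
  set N := V.card with hN
  have hle : ∀ e : {e // e ∈ E}, (e : Finset α).card ≤ N :=
    fun e => Finset.card_le_card (hE _ e.2)
  have hmin : ∀ e f : {e // e ∈ E},
      ((min (e : Finset α).card (f : Finset α).card : ℕ) : ℝ) - 1
        = ∑ k ∈ Finset.Ioc 1 N, ((if k ≤ (e : Finset α).card then (1:ℝ) else 0)
            * (if k ≤ (f : Finset α).card then (1:ℝ) else 0)) := by
    intro e f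
    have step : ∀ k ∈ Finset.Ioc 1 N,
        (if k ≤ (e : Finset α).card then (1:ℝ) else 0)
          * (if k ≤ (f : Finset α).card then (1:ℝ) else 0)
        = if k ≤ min (e : Finset α).card (f : Finset α).card then (1:ℝ) else 0 := by
      intro k _
      by_cases h1 : k ≤ (e : Finset α).card <;> by_cases h2 : k ≤ (f : Finset α).card <;>
        simp [h1, h2, le_min_iff]
    rw [Finset.sum_congr rfl step, ← Finset.sum_filter]
    have hfil : (Finset.Ioc 1 N).filter (fun k => k ≤ min (e : Finset α).card (f : Finset α).card)
        = Finset.Ioc 1 (min (e : Finset α).card (f : Finset α).card) := by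
      ext k
      simp only [Finset.mem_filter, Finset.mem_Ioc]
      have := hle e
      have := hle f
      omega
    rw [hfil]
    simp only [Finset.sum_const, Nat.card_Ioc, nsmul_eq_mul, mul_one]
    have h1 : 1 ≤ min (e : Finset α).card (f : Finset α).card := le_min (hcard e) (hcard f)
    rw [Nat.cast_sub h1]
    push_cast
    ring
  -- the Gram quadratic form vanishes
  have hQ : ∑ e : {e // e ∈ E}, ∑ f : {e // e ∈ E},
      (g e * g f * (((e : Finset α) ∩ (f : Finset α)).card : ℝ)) = 0 := by
    have := gram_aux (Finset.univ : Finset {v // v ∈ V}) g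
      (fun e v => if (v : α) ∈ (e : Finset α) then (1:ℝ) else 0)
    rw [show ∑ e : {e // e ∈ E}, ∑ f : {e // e ∈ E},
        (g e * g f * (((e : Finset α) ∩ (f : Finset α)).card : ℝ))
        = ∑ e : {e // e ∈ E}, ∑ f : {e // e ∈ E},
        (g e * g f * ∑ v : {v // v ∈ V},
          ((if (v : α) ∈ (e : Finset α) then (1:ℝ) else 0)
            * (if (v : α) ∈ (f : Finset α) then (1:ℝ) else 0))) from
      Finset.sum_congr rfl fun e _ => Finset.sum_congr rfl fun f _ => by rw [hinter e f]]
    rw [this]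
    exact Finset.sum_eq_zero fun v _ => by rw [hpt v]; norm_num
  -- split the Gram form: PSD part + sum of squares
  have hsplit : ∑ e : {e // e ∈ E}, ∑ f : {e // e ∈ E},
      (g e * g f * (((e : Finset α) ∩ (f : Finset α)).card : ℝ))
      = (∑ k ∈ Finset.Ioc 1 N,
          (∑ e : {e // e ∈ E}, g e * (if k ≤ (e : Finset α).card then (1:ℝ) else 0)) ^ 2)
        + ∑ e : {e // e ∈ E}, g e ^ 2 := by
    have expand : ∀ e f : {e // e ∈ E},
        g e * g f * (((e : Finset α) ∩ (f : Finset α)).card : ℝ)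
        = g e * g f * (∑ k ∈ Finset.Ioc 1 N, ((if k ≤ (e : Finset α).card then (1:ℝ) else 0)
            * (if k ≤ (f : Finset α).card then (1:ℝ) else 0)))
          + g e * g f * (if e = f then (1:ℝ) else 0) := by
      intro e f
      rw [hkey e f, hmin e f]
      ring
    simp_rw [expand, Finset.sum_add_distrib]
    congr 1
    · exact gram_aux _ _ _
    · refine Finset.sum_congr rfl fun e _ => ?_
      simp_rw [mul_ite, mul_one, mul_zero]
      rw [Fintype.sum_ite_eq e (fun f => g e * g f)]
      ring
  have hP : 0 ≤ ∑ k ∈ Finset.Ioc 1 N,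
      (∑ e : {e // e ∈ E}, g e * (if k ≤ (e : Finset α).card then (1:ℝ) else 0)) ^ 2 :=
    Finset.sum_nonneg fun k _ => sq_nonneg _
  have hS : ∑ e : {e // e ∈ E}, g e ^ 2 = 0 := by
    have h0 : ∑ e : {e // e ∈ E}, g e ^ 2 ≤ 0 := by
      rw [hsplit] at hQ
      linarith
    have h1 : 0 ≤ ∑ e : {e // e ∈ E}, g e ^ 2 :=
      Finset.sum_nonneg fun e _ => sq_nonneg _
    linarith
  have := (Finset.sum_eq_zero_iff_of_nonneg (fun e _ => sq_nonneg (g e))).mp hS i (Finset.mem_univ i)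
  exact pow_eq_zero_iff (by norm_num) |>.mp this
end

section
/- For every 1-Sperner hypergraph H = (V, E) with V ≠ ∅, the number of hyperedges is at most the number of vertices: |E| ≤ |V|. -/
open Finset

section Aux

variable {α : Type*} [DecidableEq α]

lemma sdiff_card_one_s13 {E : Finset (Finset α)} (h : OneSperner E)
    {e f : Finset α} (he : e ∈ E) (hf : f ∈ E) (hne : e ≠ f) (hc : e.card ≤ f.card) :
    (e \ f).card = 1 := by
  have hm := h e he f hf hne
  have h1 : (e \ f).card + (e ∩ f).card = e.card := Finset.card_sdiff_add_card_inter e f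
  have h2 : (f \ e).card + (f ∩ e).card = f.card := Finset.card_sdiff_add_card_inter f e
  have h3 : (e ∩ f).card = (f ∩ e).card := by rw [Finset.inter_comm]
  have hle : (e \ f).card ≤ (f \ e).card := by omega
  rw [min_eq_left hle] at hm
  exact hm

lemma eq_singleton_of_card_one {s : Finset α} {z : α} (h : s.card = 1) (hz : z ∈ s) :
    s = {z} := by
  obtain ⟨a, rfl⟩ := Finset.card_eq_one.mp h
  rw [Finset.mem_singleton] at hz
  rw [hz]

lemma erase_sdiff_erase' {f : Finset α} (z : α) (e : Finset α) (hzf : z ∈ f) :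
    e.erase z \ f.erase z = e \ f := by
  ext x
  simp only [mem_sdiff, mem_erase]
  constructor
  · rintro ⟨⟨hxz, hxe⟩, hn⟩
    exact ⟨hxe, fun hxf => hn ⟨hxz, hxf⟩⟩
  · rintro ⟨hxe, hxf⟩
    have hxz : x ≠ z := fun h => hxf (h ▸ hzf)
    exact ⟨⟨hxz, hxe⟩, fun h => hxf h.2⟩

lemma sdiff_sdiff_eq_sdiff {U f g : Finset α} (hUg : U ⊆ g) :
    (f \ U) \ (g \ U) = f \ g := by
  ext x
  simp only [mem_sdiff]
  constructor
  · rintro ⟨⟨hxf, hxU⟩, hn⟩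
    exact ⟨hxf, fun hxg => hn ⟨hxg, hxU⟩⟩
  · rintro ⟨hxf, hxg⟩
    exact ⟨⟨hxf, fun hxU => hxg (hUg hxU)⟩, fun h => hxg h.1⟩

lemma key_lemma {E : Finset (Finset α)} (h : OneSperner E)
    {e1 em : Finset α} (he1 : e1 ∈ E) (hem : em ∈ E)
    (hmax : ∀ f ∈ E, f.card ≤ e1.card) (hmin : ∀ f ∈ E, em.card ≤ f.card)
    {z : α} (hz : em \ e1 = {z}) :
    ∀ e ∈ E, ∀ f ∈ E, z ∈ e → z ∉ f → e \ f = {z} := by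
  have hzmem : z ∈ em \ e1 := by rw [hz]; exact mem_singleton_self z
  have hzem : z ∈ em := (mem_sdiff.mp hzmem).1
  have hze1 : z ∉ e1 := (mem_sdiff.mp hzmem).2
  intro e he f hf hze hzf
  have hef : e ≠ f := fun h' => hzf (h' ▸ hze)
  have hfem : em ≠ f := fun h' => hzf (h' ▸ hzem)
  have hemf : em \ f = {z} :=
    eq_singleton_of_card_one (sdiff_card_one_s13 h hem hf hfem (hmin f hf))
      (mem_sdiff.mpr ⟨hzem, hzf⟩)
  by_cases heem : e = em
  · rw [heem]; exact hemf
  have hee1 : e ≠ e1 := fun h' => hze1 (h' ▸ hze)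
  have hee1' : e \ e1 = {z} :=
    eq_singleton_of_card_one (sdiff_card_one_s13 h he he1 hee1 (hmax e he))
      (mem_sdiff.mpr ⟨hze, hze1⟩)
  by_contra hne
  have hzef : z ∈ e \ f := mem_sdiff.mpr ⟨hze, hzf⟩
  -- there is x ∈ e \ f with x ≠ z
  have hnsub : ¬ (e \ f ⊆ {z}) := by
    intro hsub
    rcases Finset.subset_singleton_iff.mp hsub with h' | h'
    · rw [h'] at hzef; exact absurd hzef (notMem_empty z)
    · exact hne h'
  obtain ⟨x, hx, hxz⟩ := Finset.not_subset.mp hnsub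
  rw [Finset.mem_singleton] at hxz
  have h2 : 2 ≤ (e \ f).card := Finset.one_lt_card.mpr ⟨x, hx, z, hzef, hxz⟩
  have hfe1 : (f \ e).card = 1 := by
    have hm := h e he f hf hef
    rcases min_choice (e \ f).card (f \ e).card with h' | h' <;> omega
  obtain ⟨u, hu⟩ := Finset.card_eq_one.mp hfe1
  have hfe1' : f ≠ e1 := by
    intro h'
    rw [h'] at hne
    exact hne hee1'
  have hfsd : f \ e1 = {u} := by
    have hc1 : (f \ e1).card = 1 := sdiff_card_one_s13 h hf he1 hfe1' (hmax f hf)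
    obtain ⟨v, hv⟩ := Finset.card_eq_one.mp hc1
    have hvmem : v ∈ f \ e1 := by rw [hv]; exact mem_singleton_self v
    have hvf : v ∈ f := (mem_sdiff.mp hvmem).1
    have hve1 : v ∉ e1 := (mem_sdiff.mp hvmem).2
    have hvz : v ≠ z := fun h' => hzf (h' ▸ hvf)
    have hve : v ∉ e := by
      intro hve
      have : v ∈ e \ e1 := mem_sdiff.mpr ⟨hve, hve1⟩
      rw [hee1', Finset.mem_singleton] at this
      exact hvz this
    have hvu : v = u := by
      have : v ∈ f \ e := mem_sdiff.mpr ⟨hvf, hve⟩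
      rw [hu, Finset.mem_singleton] at this
      exact this
    rw [hv, hvu]
  have hue1 : u ∉ e1 := by
    have : u ∈ f \ e1 := by rw [hfsd]; exact mem_singleton_self u
    exact (mem_sdiff.mp this).2
  -- em ⊆ e
  have hsub : em ⊆ e := by
    intro y hy
    by_cases hyz : y = z
    · rw [hyz]; exact hze
    have hyf : y ∈ f := by
      by_contra hyf
      have : y ∈ em \ f := mem_sdiff.mpr ⟨hy, hyf⟩
      rw [hemf, Finset.mem_singleton] at this
      exact hyz this
    by_contra hye
    have hyu : y = u := by
      have : y ∈ f \ e := mem_sdiff.mpr ⟨hyf, hye⟩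
      rw [hu, Finset.mem_singleton] at this
      exact this
    have hye1 : y ∈ e1 := by
      by_contra hye1
      have : y ∈ em \ e1 := mem_sdiff.mpr ⟨hy, hye1⟩
      rw [hz, Finset.mem_singleton] at this
      exact hyz this
    exact hue1 (hyu ▸ hye1)
  have hemE : em \ e = ∅ := Finset.sdiff_eq_empty_iff_subset.mpr hsub
  have hm := h em hem e he (fun h' => heem h'.symm)
  have h1 : 1 ≤ (em \ e).card := by
    have := min_le_left (em \ e).card (e \ em).card
    omega
  rw [hemE] at h1
  simp at h1

lemma aux_main_s13 : ∀ n : ℕ, ∀ V : Finset α, ∀ E : Finset (Finset α), V.card ≤ n →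
    (∀ e ∈ E, e ⊆ V) → OneSperner E → V.Nonempty → E.card ≤ V.card := by
  intro n
  induction n with
  | zero =>
    intro V E hn _ _ hV
    have : V.card = 0 := Nat.le_zero.mp hn
    rw [Finset.card_eq_zero] at this
    rw [this] at hV
    exact absurd hV (by simp)
  | succ n ih =>
    intro V E hn hE hS hV
    by_cases hE2 : E.card ≤ 1
    · exact hE2.trans hV.card_pos
    push_neg at hE2
    have hEne : E.Nonempty := card_pos.mp (by omega)
    obtain ⟨e1, he1, hmax⟩ := E.exists_max_image (fun e => e.card) hEne
    have hE'ne : (E.erase e1).Nonempty := by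
      rw [← card_pos, card_erase_of_mem he1]; omega
    obtain ⟨em, hem', hmin'⟩ := (E.erase e1).exists_min_image (fun e => e.card) hE'ne
    have hem : em ∈ E := mem_of_mem_erase hem'
    have hne : em ≠ e1 := ne_of_mem_erase hem'
    have hmin : ∀ f ∈ E, em.card ≤ f.card := by
      intro f hf
      by_cases hf1 : f = e1
      · rw [hf1]; exact hmax em hem
      · exact hmin' f (mem_erase.mpr ⟨hf1, hf⟩)
    have hcard1 : (em \ e1).card = 1 := sdiff_card_one_s13 hS hem he1 hne (hmax em hem)
    obtain ⟨z, hz⟩ := Finset.card_eq_one.mp hcard1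
    have hkey := key_lemma hS he1 hem hmax hmin hz
    have hzmem : z ∈ em \ e1 := by rw [hz]; exact mem_singleton_self z
    have hzem : z ∈ em := (mem_sdiff.mp hzmem).1
    have hze1 : z ∉ e1 := (mem_sdiff.mp hzmem).2
    have hzV : z ∈ V := hE em hem hzem
    have he1ne : e1.Nonempty := by
      have hm := hS em hem e1 he1 hne
      have h1 : 1 ≤ (e1 \ em).card := by
        have := min_le_right (em \ e1).card (e1 \ em).card
        omega
      obtain ⟨x, hx⟩ := card_pos.mp (show 0 < (e1 \ em).card by omega)
      exact ⟨x, (mem_sdiff.mp hx).1⟩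
    set E1 := E.filter (fun e => z ∈ e) with hE1def
    set E0 := E.filter (fun e => z ∉ e) with hE0def
    have hsplit : E1.card + E0.card = E.card :=
      card_filter_add_card_filter_not (p := fun e => z ∈ e)
    set U := E1.sup (fun e => e.erase z) with hUdef
    have hUsub : ∀ f ∈ E0, U ⊆ f := by
      intro f hf
      intro x hx
      obtain ⟨e, heE1, hx⟩ := Finset.mem_sup.mp hx
      obtain ⟨hfE, hzf⟩ := mem_filter.mp hf
      obtain ⟨heE, hze⟩ := mem_filter.mp heE1
      have hd := hkey e heE f hfE hze hzf
      obtain ⟨hxz, hxe⟩ := mem_erase.mp hx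
      by_contra hxf
      have : x ∈ e \ f := mem_sdiff.mpr ⟨hxe, hxf⟩
      rw [hd, Finset.mem_singleton] at this
      exact hxz this
    have he1E0 : e1 ∈ E0 := mem_filter.mpr ⟨he1, hze1⟩
    have hUe1 : U ⊆ e1 := hUsub e1 he1E0
    have hzU : z ∉ U := by
      intro hzU
      obtain ⟨e, _, hze⟩ := Finset.mem_sup.mp hzU
      exact (mem_erase.mp hze).1 rfl
    have hUV : U ⊆ V.erase z := fun x hx =>
      mem_erase.mpr ⟨fun h => hzU (h ▸ hx), (hUe1.trans (hE e1 he1)) hx⟩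
    set W := (V.erase z) \ U with hWdef
    have hWV : W ⊆ V.erase z := sdiff_subset
    have hcards : U.card + W.card + 1 = V.card := by
      have h1 : (V.erase z).card + 1 = V.card := card_erase_add_one hzV
      have h2 : W.card + U.card = (V.erase z).card := by
        rw [hWdef]; exact card_sdiff_add_card_eq_card hUV
      omega
    have hVerase : (V.erase z).card ≤ n := by
      have h1 : (V.erase z).card + 1 = V.card := card_erase_add_one hzV
      omega
    -- bound E1
    have hE1bound : U.Nonempty → E1.card ≤ U.card := by
      intro hU
      have hinj : Set.InjOn (fun e : Finset α => e.erase z) ↑E1 := by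
        intro a ha b hb hab
        have hza : z ∈ a := (mem_filter.mp (by exact_mod_cast ha : a ∈ E1)).2
        have hzb : z ∈ b := (mem_filter.mp (by exact_mod_cast hb : b ∈ E1)).2
        have hab' : a.erase z = b.erase z := hab
        rw [← insert_erase hza, ← insert_erase hzb, hab']
      have hcard : (E1.image (fun e : Finset α => e.erase z)).card = E1.card :=
        card_image_of_injOn hinj
      have hOS : OneSperner (E1.image (fun e : Finset α => e.erase z)) := by
        intro a ha b hb hab
        obtain ⟨e, he, rfl⟩ := mem_image.mp ha
        obtain ⟨f, hf, rfl⟩ := mem_image.mp hb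
        have hef : e ≠ f := fun h' => hab (by rw [h'])
        have hze := (mem_filter.mp he).2
        have hzf := (mem_filter.mp hf).2
        show min (e.erase z \ f.erase z).card (f.erase z \ e.erase z).card = 1
        rw [erase_sdiff_erase' z e hzf, erase_sdiff_erase' z f hze]
        exact hS e (mem_filter.mp he).1 f (mem_filter.mp hf).1 hef
      have hsub : ∀ a ∈ E1.image (fun e : Finset α => e.erase z), a ⊆ U := by
        intro a ha
        obtain ⟨e, he, rfl⟩ := mem_image.mp ha
        exact fun x hx => Finset.mem_sup.mpr ⟨e, he, hx⟩
      have hUn : U.card ≤ n := (card_le_card hUV).trans hVerase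
      calc E1.card = (E1.image (fun e : Finset α => e.erase z)).card := hcard.symm
        _ ≤ U.card := ih U _ hUn hsub hOS hU
    have hE1small : U = ∅ → E1.card ≤ 1 := by
      intro hU
      apply card_le_one.mpr
      have hall : ∀ c ∈ E1, c = {z} := by
        intro c hc
        have hzc : z ∈ c := (mem_filter.mp hc).2
        have hce : c.erase z ⊆ U := fun x hx => Finset.mem_sup.mpr ⟨c, hc, hx⟩
        rw [hU, Finset.subset_empty] at hce
        rw [← insert_erase hzc, hce]
        rfl
      intro a ha b hb
      rw [hall a ha, hall b hb]
    -- bound E0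
    have hE0bound : W.Nonempty → E0.card ≤ W.card := by
      intro hW
      have hinj : Set.InjOn (fun f : Finset α => f \ U) ↑E0 := by
        intro a ha b hb hab
        have hUa : U ⊆ a := hUsub a (by exact_mod_cast ha)
        have hUb : U ⊆ b := hUsub b (by exact_mod_cast hb)
        have hab' : a \ U = b \ U := hab
        rw [← Finset.sdiff_union_of_subset hUa, ← Finset.sdiff_union_of_subset hUb, hab']
      have hcard : (E0.image (fun f : Finset α => f \ U)).card = E0.card :=
        card_image_of_injOn hinj
      have hOS : OneSperner (E0.image (fun f : Finset α => f \ U)) := by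
        intro a ha b hb hab
        obtain ⟨e, he, rfl⟩ := mem_image.mp ha
        obtain ⟨f, hf, rfl⟩ := mem_image.mp hb
        have hef : e ≠ f := fun h' => hab (by rw [h'])
        show min ((e \ U) \ (f \ U)).card ((f \ U) \ (e \ U)).card = 1
        rw [sdiff_sdiff_eq_sdiff (hUsub f hf), sdiff_sdiff_eq_sdiff (hUsub e he)]
        exact hS e (mem_filter.mp he).1 f (mem_filter.mp hf).1 hef
      have hsub : ∀ a ∈ E0.image (fun f : Finset α => f \ U), a ⊆ W := by
        intro a ha
        obtain ⟨f, hf, rfl⟩ := mem_image.mp ha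
        intro x hx
        obtain ⟨hxf, hxU⟩ := mem_sdiff.mp hx
        have hzf : z ∉ f := (mem_filter.mp hf).2
        have hxV : x ∈ V := hE f (mem_filter.mp hf).1 hxf
        have hxz : x ≠ z := fun h' => hzf (h' ▸ hxf)
        rw [hWdef]
        exact mem_sdiff.mpr ⟨mem_erase.mpr ⟨hxz, hxV⟩, hxU⟩
      have hWn : W.card ≤ n := (card_le_card hWV).trans hVerase
      calc E0.card = (E0.image (fun f : Finset α => f \ U)).card := hcard.symm
        _ ≤ W.card := ih W _ hWn hsub hOS hW
    have hE0small : W = ∅ → E0.card ≤ 1 := by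
      intro hW
      apply card_le_one.mpr
      have hall : ∀ f ∈ E0, f = U := by
        intro f hf
        apply Finset.Subset.antisymm
        · have hzf : z ∉ f := (mem_filter.mp hf).2
          have hfV : f ⊆ V := hE f (mem_filter.mp hf).1
          have hfVe : f ⊆ V.erase z := fun x hx =>
            mem_erase.mpr ⟨fun h' => hzf (h' ▸ hx), hfV hx⟩
          have hVeU : V.erase z ⊆ U := Finset.sdiff_eq_empty_iff_subset.mp hW
          exact hfVe.trans hVeU
        · exact hUsub f hf
      intro a ha b hb
      rw [hall a ha, hall b hb]
    -- combine
    rcases U.eq_empty_or_nonempty with hU | hU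
    · rcases W.eq_empty_or_nonempty with hW | hW
      · -- contradiction: e1 nonempty but V.erase z = ∅
        exfalso
        have hU0 : U.card = 0 := by rw [hU]; rfl
        have hW0 : W.card = 0 := by rw [hW]; rfl
        have hVe : (V.erase z).card = 0 := by
          have h1 : (V.erase z).card + 1 = V.card := card_erase_add_one hzV
          omega
        rw [Finset.card_eq_zero] at hVe
        obtain ⟨x, hx⟩ := he1ne
        have : x ∈ V.erase z :=
          mem_erase.mpr ⟨fun h' => hze1 (h' ▸ hx), hE e1 he1 hx⟩
        rw [hVe] at this
        exact absurd this (notMem_empty x)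
      · have h1 := hE1small hU
        have h0 := hE0bound hW
        have hU0 : U.card = 0 := by rw [hU]; rfl
        omega
    · rcases W.eq_empty_or_nonempty with hW | hW
      · have h1 := hE1bound hU
        have h0 := hE0small hW
        have hW0 : W.card = 0 := by rw [hW]; rfl
        omega
      · have h1 := hE1bound hU
        have h0 := hE0bound hW
        omega

end Aux

theorem stmt_13 {α : Type*} [DecidableEq α] (V : Finset α) (E : Finset (Finset α))
    (hE : ∀ e ∈ E, e ⊆ V) (h : OneSperner E) (hV : V.Nonempty) :
    E.card ≤ V.card := by
  exact aux_main_s13 V.card V E le_rfl hE h hV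
end

section
/- Let H = (V, E) be a 1-Sperner hypergraph with |V| ≥ 2 that has no universal vertex, no isolated vertex, and no pair of twin vertices. Then |E| ≥ ⌈(|V| + 2)/2⌉ (equivalently, 2·|E| ≥ |V| + 2). -/
open Finset

namespace OneSpernerAux

variable {α : Type*} [DecidableEq α]

lemma sperner_subset {E A : Finset (Finset α)} (h : OneSperner E) (hA : A ⊆ E) :
    OneSperner A := fun e he f hf => h e (hA he) f (hA hf)

lemma sdiff_card_one {E : Finset (Finset α)} (h : OneSperner E) {e f : Finset α}
    (he : e ∈ E) (hf : f ∈ E) (hne : e ≠ f) (hle : e.card ≤ f.card) :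
    (e \ f).card = 1 := by
  have h1 := h e he f hf hne
  have h2 : (e \ f).card + (e ∩ f).card = e.card := Finset.card_sdiff_add_card_inter e f
  have h3 : (f \ e).card + (f ∩ e).card = f.card := Finset.card_sdiff_add_card_inter f e
  have h4 : (f ∩ e).card = (e ∩ f).card := by rw [Finset.inter_comm]
  omega

lemma eq_singleton_of_mem_card_one {s : Finset α} {z : α} (h1 : s.card = 1) (hz : z ∈ s) :
    s = {z} := by
  rcases Finset.card_eq_one.mp h1 with ⟨a, rfl⟩
  simp only [Finset.mem_singleton] at hz
  subst hz; rfl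

/-- Structural lemma: every 1-Sperner hypergraph with at least two hyperedges has a
"gluing vertex" `z` : for every edge `e` containing `z` and every edge `f` not
containing `z`, `e \ f = {z}`. -/
lemma pivot : ∀ (n : ℕ) (E : Finset (Finset α)), E.card = n → OneSperner E → 2 ≤ E.card →
    ∃ z : α, (∃ e ∈ E, z ∈ e) ∧ (∃ f ∈ E, z ∉ f) ∧
      ∀ e ∈ E, ∀ f ∈ E, z ∈ e → z ∉ f → e \ f = {z} := by
  intro n
  induction n using Nat.strong_induction_on with
  | _ n ih =>
  intro E hcard hsp h2
  by_cases hn2 : E.card = 2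
  · -- base case : two edges
    obtain ⟨e, f, hef, hE⟩ := Finset.card_eq_two.mp hn2
    have he : e ∈ E := by rw [hE]; simp
    have hf : f ∈ E := by rw [hE]; simp
    have hmin := hsp e he f hf hef
    have hone : (e \ f).card = 1 ∨ (f \ e).card = 1 := by omega
    -- symmetric helper
    have main : ∀ a b : Finset α, a ≠ b → E = {a, b} → (a \ b).card = 1 →
        ∃ z : α, (∃ e ∈ E, z ∈ e) ∧ (∃ f ∈ E, z ∉ f) ∧
          ∀ e ∈ E, ∀ f ∈ E, z ∈ e → z ∉ f → e \ f = {z} := by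
      intro a b hab hEab hcab
      obtain ⟨z, hz⟩ := Finset.card_eq_one.mp hcab
      have hza : z ∈ a := by
        have : z ∈ a \ b := by rw [hz]; simp
        exact (Finset.mem_sdiff.mp this).1
      have hzb : z ∉ b := by
        have : z ∈ a \ b := by rw [hz]; simp
        exact (Finset.mem_sdiff.mp this).2
      have haE : a ∈ E := by rw [hEab]; simp
      have hbE : b ∈ E := by rw [hEab]; simp
      refine ⟨z, ⟨a, haE, hza⟩, ⟨b, hbE, hzb⟩, ?_⟩
      intro e' he' f' hf' hze' hzf'
      rw [hEab] at he' hf'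
      simp only [Finset.mem_insert, Finset.mem_singleton] at he' hf'
      rcases he' with rfl | rfl
      · rcases hf' with rfl | rfl
        · exact absurd hze' hzf'
        · exact hz
      · exact absurd hze' hzb
    rcases hone with h1 | h1
    · exact main e f hef hE h1
    · exact main f e (Ne.symm hef) (by rw [hE]; exact Finset.pair_comm e f) h1
  · -- inductive step : at least three edges
    have h3 : 3 ≤ E.card := by omega
    have hEne : E.Nonempty := Finset.card_pos.mp (by omega)
    obtain ⟨e1, he1, hmin⟩ := Finset.exists_min_image E Finset.card hEne
    set E' := E.erase e1 with hE'def
    have hsub : E' ⊆ E := Finset.erase_subset _ _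
    have hcard' : E'.card = E.card - 1 := Finset.card_erase_of_mem he1
    have hsp' : OneSperner E' := sperner_subset hsp hsub
    -- every other edge g satisfies (e1 \ g).card = 1
    have diffmin : ∀ g ∈ E, g ≠ e1 → (e1 \ g).card = 1 := by
      intro g hg hge
      exact sdiff_card_one hsp he1 hg (Ne.symm hge) (hmin g hg)
    obtain ⟨z, ⟨a0, ha0, hza0⟩, ⟨b0, hb0, hzb0⟩, hcross⟩ :=
      ih (n - 1) (by omega) E' (by omega) hsp' (by omega)
    by_cases hz1 : z ∈ e1
    · -- z works for E as well
      refine ⟨z, ⟨e1, he1, hz1⟩, ⟨b0, hsub hb0, hzb0⟩, ?_⟩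
      intro e he f hf hze hzf
      have hfne : f ≠ e1 := fun h => hzf (h ▸ hz1)
      have hf' : f ∈ E' := Finset.mem_erase.mpr ⟨hfne, hf⟩
      by_cases hee : e = e1
      · subst hee
        exact eq_singleton_of_mem_card_one (diffmin f hf hfne)
          (Finset.mem_sdiff.mpr ⟨hze, hzf⟩)
      · exact hcross e (Finset.mem_erase.mpr ⟨hee, he⟩) f hf' hze hzf
    · by_cases hall : ∀ e ∈ E', z ∈ e → e \ e1 = {z}
      · refine ⟨z, ⟨a0, hsub ha0, hza0⟩, ⟨e1, he1, hz1⟩, ?_⟩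
        intro e he f hf hze hzf
        have hene : e ≠ e1 := fun h => hz1 (h ▸ hze)
        have he' : e ∈ E' := Finset.mem_erase.mpr ⟨hene, he⟩
        by_cases hff : f = e1
        · subst hff; exact hall e he' hze
        · exact hcross e he' f (Finset.mem_erase.mpr ⟨hff, hf⟩) hze hzf
      · push_neg at hall
        obtain ⟨es, hes, hzes, hnes⟩ := hall
        have hes1 : es ≠ e1 := fun h => hz1 (h ▸ hzes)
        have hzd : z ∈ es \ e1 := Finset.mem_sdiff.mpr ⟨hzes, hz1⟩
        have hge2 : 2 ≤ (es \ e1).card := by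
          by_contra hc
          push_neg at hc
          have hpos : 0 < (es \ e1).card := Finset.card_pos.mpr ⟨z, hzd⟩
          have hcc : (es \ e1).card = 1 := by omega
          exact hnes (eq_singleton_of_mem_card_one hcc hzd)
        have h11 : (e1 \ es).card = 1 := by
          have hmm := hsp e1 he1 es (hsub hes) (Ne.symm hes1)
          omega
        obtain ⟨x, hx⟩ := Finset.card_eq_one.mp h11
        have hx1 : x ∈ e1 := by
          have : x ∈ e1 \ es := by rw [hx]; simp
          exact (Finset.mem_sdiff.mp this).1
        have hxes : x ∉ es := by
          have : x ∈ e1 \ es := by rw [hx]; simp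
          exact (Finset.mem_sdiff.mp this).2
        have hxz : x ≠ z := fun h => hz1 (h ▸ hx1)
        -- e1 \ {x} ⊆ es
        have hsub_es : ∀ w ∈ e1, w ≠ x → w ∈ es := by
          intro w hw hwx
          by_contra hwes
          have : w ∈ e1 \ es := Finset.mem_sdiff.mpr ⟨hw, hwes⟩
          rw [hx] at this
          exact hwx (Finset.mem_singleton.mp this)
        have claim1 : ∀ f ∈ E', z ∉ f → e1 \ f = {x} := by
          intro f hf hzf
          have hfne : f ≠ e1 := (Finset.mem_erase.mp hf).1
          have hsing : (e1 \ f).card = 1 := diffmin f (hsub hf) hfne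
          have hss : e1 \ f ⊆ {x} := by
            intro w hw
            rw [Finset.mem_singleton]
            by_contra hwx
            obtain ⟨hw1, hw2⟩ := Finset.mem_sdiff.mp hw
            have hwz : w ≠ z := fun h => hz1 (h ▸ hw1)
            have hwes : w ∈ es := hsub_es w hw1 hwx
            have hesf : es \ f = {z} := hcross es hes f hf hzes hzf
            have : w ∈ es \ f := Finset.mem_sdiff.mpr ⟨hwes, hw2⟩
            rw [hesf] at this
            exact hwz (Finset.mem_singleton.mp this)
          exact Finset.eq_of_subset_of_card_le hss (by simp [hsing])
        have claim2 : ∀ g ∈ E, g ≠ e1 → e1 \ g = {x} := by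
          intro g hg hge
          have hg' : g ∈ E' := Finset.mem_erase.mpr ⟨hge, hg⟩
          by_cases hzg : z ∈ g
          · have hxg : x ∉ g := by
              intro hxg
              have h1 : g \ b0 = {z} := hcross g hg' b0 hb0 hzg hzb0
              have h2 : e1 \ b0 = {x} := claim1 b0 hb0 hzb0
              have hxb0 : x ∉ b0 := by
                have : x ∈ e1 \ b0 := by rw [h2]; simp
                exact (Finset.mem_sdiff.mp this).2
              have : x ∈ g \ b0 := Finset.mem_sdiff.mpr ⟨hxg, hxb0⟩
              rw [h1] at this
              exact hxz (Finset.mem_singleton.mp this)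
            exact eq_singleton_of_mem_card_one (diffmin g hg hge)
              (Finset.mem_sdiff.mpr ⟨hx1, hxg⟩)
          · exact claim1 g hg' hzg
        refine ⟨x, ⟨e1, he1, hx1⟩, ⟨es, hsub hes, hxes⟩, ?_⟩
        intro e he f hf hxe hxf
        have hee1 : e = e1 := by
          by_contra hee
          have := claim2 e he hee
          have : x ∈ e1 \ e := by rw [this]; simp
          exact (Finset.mem_sdiff.mp this).2 hxe
        rw [hee1]
        have hfne : f ≠ e1 := fun h => hxf (h ▸ hx1)
        exact claim2 f hf hfne

/-- Counting lemma: the number of distinct proper nonempty traces of a nonempty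
1-Sperner hypergraph `E` is at most `2 |E| - 2`. -/
lemma key : ∀ (n : ℕ) (E : Finset (Finset α)), E.card = n → OneSperner E → E.Nonempty →
    ∀ S : Finset (Finset (Finset α)),
      (∀ s ∈ S, (∃ v : α, s = E.filter (fun e => v ∈ e)) ∧ s.Nonempty ∧ s ≠ E) →
      S.card + 2 ≤ 2 * E.card := by
  intro n
  induction n using Nat.strong_induction_on with
  | _ n ih =>
  intro E hcard hsp hne S hS
  by_cases hn1 : E.card = 1
  · -- single edge : S must be empty
    obtain ⟨e, hE⟩ := Finset.card_eq_one.mp hn1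
    have hSempty : S = ∅ := by
      apply Finset.eq_empty_of_forall_notMem
      intro s hs
      obtain ⟨⟨v, hv⟩, hsne, hsnE⟩ := hS s hs
      have hsub : s ⊆ E := hv ▸ Finset.filter_subset _ _
      rw [hE] at hsub
      rcases Finset.subset_singleton_iff.mp hsub with rfl | h
      · exact hsne.ne_empty rfl
      · exact hsnE (h.trans hE.symm)
    rw [hSempty, Finset.card_empty]
    omega
  · have h2 : 2 ≤ E.card := by
      have := Finset.card_pos.mpr hne
      omega
    obtain ⟨z, ⟨a0, ha0, hza0⟩, ⟨b0, hb0, hzb0⟩, hcross⟩ := pivot E.card E rfl hsp h2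
    set A := E.filter (fun e => z ∈ e) with hAdef
    set B := E.filter (fun e => z ∉ e) with hBdef
    have hAne : A.Nonempty := ⟨a0, Finset.mem_filter.mpr ⟨ha0, hza0⟩⟩
    have hBne : B.Nonempty := ⟨b0, Finset.mem_filter.mpr ⟨hb0, hzb0⟩⟩
    have hABcard : A.card + B.card = E.card :=
      Finset.card_filter_add_card_filter_not _
    have hAsub : A ⊆ E := Finset.filter_subset _ _
    have hBsub : B ⊆ E := Finset.filter_subset _ _
    have hmemAB : ∀ e ∈ E, e ∈ A ∨ e ∈ B := by
      intro e heE
      by_cases hze : z ∈ e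
      · exact Or.inl (Finset.mem_filter.mpr ⟨heE, hze⟩)
      · exact Or.inr (Finset.mem_filter.mpr ⟨heE, hze⟩)
    set S1 := S.filter (fun s => B ⊆ s ∧ s ≠ B) with hS1def
    set S2 := S.filter (fun s => s ⊆ B ∧ s ≠ B) with hS2def
    -- cover
    have hcover : S ⊆ insert A (insert B (S1 ∪ S2)) := by
      intro s hs
      obtain ⟨⟨v, hv⟩, hsne, hsnE⟩ := hS s hs
      simp only [Finset.mem_insert, Finset.mem_union]
      by_cases hvz : v = z
      · left; rw [hv, hvz]
      · by_cases hva : ∃ a ∈ E, z ∈ a ∧ v ∈ a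
        · obtain ⟨a, haE, hza, hvaa⟩ := hva
          have hBs : B ⊆ s := by
            intro f hf
            obtain ⟨hfE, hzf⟩ := Finset.mem_filter.mp hf
            have haf : a \ f = {z} := hcross a haE f hfE hza hzf
            have hvf : v ∈ f := by
              by_contra hvf
              have : v ∈ a \ f := Finset.mem_sdiff.mpr ⟨hvaa, hvf⟩
              rw [haf] at this
              exact hvz (Finset.mem_singleton.mp this)
            rw [hv]
            exact Finset.mem_filter.mpr ⟨hfE, hvf⟩
          by_cases hsB : s = B
          · right; left; exact hsB
          · right; right; left
            exact Finset.mem_filter.mpr ⟨hs, hBs, hsB⟩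
        · have hsB : s ⊆ B := by
            intro e hes
            rw [hv] at hes
            obtain ⟨heE, hve⟩ := Finset.mem_filter.mp hes
            have hze : z ∉ e := fun hze => hva ⟨e, heE, hze, hve⟩
            exact Finset.mem_filter.mpr ⟨heE, hze⟩
          by_cases hsB2 : s = B
          · right; left; exact hsB2
          · right; right; right
            exact Finset.mem_filter.mpr ⟨hs, hsB, hsB2⟩
    have hcard_cover : S.card ≤ 2 + (S1.card + S2.card) := by
      calc S.card ≤ (insert A (insert B (S1 ∪ S2))).card := Finset.card_le_card hcover
        _ ≤ 1 + (insert B (S1 ∪ S2)).card := by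
            have := Finset.card_insert_le A (insert B (S1 ∪ S2)); omega
        _ ≤ 1 + (1 + (S1 ∪ S2).card) := by
            have := Finset.card_insert_le B (S1 ∪ S2); omega
        _ ≤ 2 + (S1.card + S2.card) := by
            have := Finset.card_union_le S1 S2; omega
    -- S1 maps injectively to traces of A
    have hS1sub : ∀ s ∈ S1, s ⊆ E := by
      intro s hs
      obtain ⟨⟨v, hv⟩, _, _⟩ := hS s (Finset.mem_filter.mp hs).1
      exact hv ▸ Finset.filter_subset _ _
    have hrecon : ∀ s ∈ S1, s = (s ∩ A) ∪ B := by
      intro s hs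
      obtain ⟨hsS, hBs, hsnB⟩ := Finset.mem_filter.mp hs
      apply Finset.Subset.antisymm
      · intro e hes
        rcases hmemAB e (hS1sub s hs hes) with hA | hB
        · exact Finset.mem_union_left _ (Finset.mem_inter.mpr ⟨hes, hA⟩)
        · exact Finset.mem_union_right _ hB
      · intro e hee
        rcases Finset.mem_union.mp hee with h | h
        · exact (Finset.mem_inter.mp h).1
        · exact hBs h
    set S1' := S1.image (fun s => s ∩ A) with hS1'def
    have hS1card : S1.card = S1'.card := by
      rw [hS1'def]
      rw [Finset.card_image_of_injOn]
      intro s hs t ht hst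
      simp only [Finset.mem_coe] at hs ht
      dsimp only at hst
      rw [hrecon s hs, hrecon t ht, hst]
    -- apply IH to A with S1'
    have hApos : 0 < A.card := Finset.card_pos.mpr hAne
    have hBpos : 0 < B.card := Finset.card_pos.mpr hBne
    have hIH_A : S1'.card + 2 ≤ 2 * A.card := by
      apply ih A.card (by omega) A rfl (sperner_subset hsp hAsub) hAne
      intro t ht
      obtain ⟨s, hsS1, hts⟩ := Finset.mem_image.mp ht
      obtain ⟨hsS, hBs, hsnB⟩ := Finset.mem_filter.mp hsS1
      obtain ⟨⟨v, hv⟩, hsne, hsnE⟩ := hS s hsS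
      refine ⟨⟨v, ?_⟩, ?_, ?_⟩
      · rw [← hts, hv, hAdef]
        ext e
        simp only [Finset.mem_inter, Finset.mem_filter]
        tauto
      · -- t nonempty
        have hss : B ⊂ s := Finset.ssubset_iff_subset_ne.mpr ⟨hBs, Ne.symm hsnB⟩
        obtain ⟨e, hes, heB⟩ := Finset.exists_of_ssubset hss
        rcases hmemAB e (hS1sub s hsS1 hes) with hA | hB
        · exact ⟨e, hts ▸ Finset.mem_inter.mpr ⟨hes, hA⟩⟩
        · exact absurd hB heB
      · -- t ≠ A
        intro htA
        apply hsnE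
        apply Finset.Subset.antisymm (hS1sub s hsS1)
        intro e heE
        rcases hmemAB e heE with hA | hB
        · have h1 : e ∈ s ∩ A := by rw [hts, htA]; exact hA
          exact (Finset.mem_inter.mp h1).1
        · exact hBs hB
    -- apply IH to B with S2
    have hIH_B : S2.card + 2 ≤ 2 * B.card := by
      apply ih B.card (by omega) B rfl (sperner_subset hsp hBsub) hBne
      intro s hsS2
      obtain ⟨hsS, hsB, hsnB⟩ := Finset.mem_filter.mp hsS2
      obtain ⟨⟨v, hv⟩, hsne, hsnE⟩ := hS s hsS
      refine ⟨⟨v, ?_⟩, hsne, hsnB⟩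
      ext e
      constructor
      · intro he
        have heB : e ∈ B := hsB he
        rw [hv] at he
        obtain ⟨heE, hve⟩ := Finset.mem_filter.mp he
        exact Finset.mem_filter.mpr ⟨heB, hve⟩
      · intro he
        obtain ⟨heB, hve⟩ := Finset.mem_filter.mp he
        rw [hv]
        exact Finset.mem_filter.mpr ⟨hBsub heB, hve⟩
    omega

end OneSpernerAux

theorem stmt_14 {α : Type*} [DecidableEq α] (V : Finset α) (E : Finset (Finset α))
    (hE : ∀ e ∈ E, e ⊆ V) (h : OneSperner E) (hV : 2 ≤ V.card)
    (hNoUniversal : ¬∃ u ∈ V, ∀ e ∈ E, u ∈ e)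
    (hNoIsolated : ¬∃ u ∈ V, ∀ e ∈ E, u ∉ e)
    (hNoTwins : ∀ u ∈ V, ∀ v ∈ V, u ≠ v → ¬(∀ e ∈ E, u ∈ e ↔ v ∈ e)) :
    V.card + 2 ≤ 2 * E.card := by
  have hVne : V.Nonempty := Finset.card_pos.mp (by omega)
  have hEne : E.Nonempty := by
    by_contra hc
    rw [Finset.not_nonempty_iff_eq_empty] at hc
    obtain ⟨u, hu⟩ := hVne
    exact hNoIsolated ⟨u, hu, by simp [hc]⟩
  set S := V.image (fun v => E.filter (fun e => v ∈ e)) with hSdef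
  have hScard : S.card = V.card := by
    rw [hSdef]
    apply Finset.card_image_of_injOn
    intro u hu v hv huv
    simp only [Finset.mem_coe] at hu hv
    dsimp only at huv
    by_contra hne
    apply hNoTwins u hu v hv hne
    intro e heE
    constructor
    · intro hue
      have : e ∈ E.filter (fun e => u ∈ e) := Finset.mem_filter.mpr ⟨heE, hue⟩
      rw [huv] at this
      exact (Finset.mem_filter.mp this).2
    · intro hve
      have : e ∈ E.filter (fun e => v ∈ e) := Finset.mem_filter.mpr ⟨heE, hve⟩
      rw [← huv] at this
      exact (Finset.mem_filter.mp this).2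
  have hkey := OneSpernerAux.key E.card E rfl h hEne S ?_
  · omega
  · intro s hs
    obtain ⟨v, hvV, hvs⟩ := Finset.mem_image.mp hs
    refine ⟨⟨v, hvs.symm⟩, ?_, ?_⟩
    · -- nonempty : v not isolated
      rw [Finset.nonempty_iff_ne_empty]
      intro hempty
      apply hNoIsolated
      refine ⟨v, hvV, fun e heE hve => ?_⟩
      have : e ∈ E.filter (fun e => v ∈ e) := Finset.mem_filter.mpr ⟨heE, hve⟩
      rw [hvs, hempty] at this
      exact Finset.notMem_empty e this
    · -- proper : v not universal
      intro hfull
      apply hNoUniversal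
      refine ⟨v, hvV, fun e heE => ?_⟩
      have : e ∈ E.filter (fun e => v ∈ e) := by rw [hvs, hfull]; exact heE
      exact (Finset.mem_filter.mp this).2
end

section
/- Let G be a finite simple graph, let A and B be maximal cliques of G, let a ∈ A \ B and b ∈ B \ A, and suppose a and b are adjacent in G. Then the set (A \ {a}) ∪ {b} contains no maximal clique of G (i.e., it is an independent set of the clique hypergraph of G). -/
open Finset

/-- A finset `A` is a maximal clique of a graph `G` if it is a clique and is not
properly contained in any other clique. -/
def IsMaxClique {α : Type*} (G : SimpleGraph α) (A : Finset α) : Prop :=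
  G.IsClique (A : Set α) ∧ ∀ B : Finset α, G.IsClique (B : Set α) → A ⊆ B → A = B

theorem stmt_15 {α : Type*} [Fintype α] [DecidableEq α] (G : SimpleGraph α)
    (A B : Finset α) (hA : IsMaxClique G A) (hB : IsMaxClique G B)
    (a b : α) (ha : a ∈ A \ B) (hb : b ∈ B \ A) (hab : G.Adj a b) :
    ¬∃ C : Finset α, IsMaxClique G C ∧ C ⊆ insert b (A.erase a) := by
  rintro ⟨C, ⟨hCclique, hCmax⟩, hCsub⟩
  obtain ⟨haA, haB⟩ := Finset.mem_sdiff.mp ha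
  obtain ⟨hbB, hbA⟩ := Finset.mem_sdiff.mp hb
  by_cases hbC : b ∈ C
  · -- insert a C is a clique, contradicting maximality of C
    have hclique : G.IsClique ((insert a C : Finset α) : Set α) := by
      intro x hx y hy hxy
      simp only [Finset.coe_insert, Set.mem_insert_iff, Finset.mem_coe] at hx hy
      have key : ∀ z ∈ C, z ≠ a → G.Adj a z := by
        intro z hz hza
        have hz' := hCsub hz
        rcases Finset.mem_insert.mp hz' with h | h
        · subst h; exact hab
        · exact hA.1 haA (Finset.mem_erase.mp h).2 (Ne.symm hza)
      rcases hx with rfl | hx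
      · rcases hy with rfl | hy
        · exact absurd rfl hxy
        · exact key y hy (Ne.symm hxy)
      · rcases hy with rfl | hy
        · exact (key x hx hxy).symm
        · exact hCclique hx hy hxy
    have := hCmax (insert a C) hclique (Finset.subset_insert a C)
    have haC : a ∈ C := this ▸ Finset.mem_insert_self a C
    have := hCsub haC
    rcases Finset.mem_insert.mp this with h | h
    · exact haB (h ▸ hbB)
    · exact (Finset.mem_erase.mp h).1 rfl
  · -- C ⊆ A, so C = A by maximality of C, but a ∈ A \ C
    have hCA : C ⊆ A := by
      intro x hx
      rcases Finset.mem_insert.mp (hCsub hx) with h | h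
      · exact absurd (h ▸ hx) hbC
      · exact Finset.mem_erase.mp h |>.2
    have : C = A := hCmax A hA.1 hCA
    subst this
    rcases Finset.mem_insert.mp (hCsub haA) with h | h
    · exact haB (h ▸ hbB)
    · exact (Finset.mem_erase.mp h).1 rfl
end

section
/- Let G be a finite simple graph whose clique hypergraph C(G) is 2-asummable. Then for every pair of maximal cliques A, B of G and every a ∈ A \ B and b ∈ B \ A, the vertices a and b are not adjacent in G. -/
open Finset

/-- A set of vertices is independent in the clique hypergraph `C(G)` if it
contains no maximal clique of `G`. -/
def IndepInCliqueHypergraph {α : Type*} (G : SimpleGraph α) (X : Finset α) : Prop :=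
  ¬∃ C : Finset α, IsMaxClique G C ∧ C ⊆ X

/-- The characteristic vector of a finset of vertices. -/
def chi {α : Type*} [DecidableEq α] (X : Finset α) : α → ℕ :=
  fun v => if v ∈ X then 1 else 0

/-- The clique hypergraph of `G` is 2-asummable if there are no independent sets
`A1, A2` and dependent sets `B1, B2` with `χ^{A1} + χ^{A2} = χ^{B1} + χ^{B2}`. -/
def CliqueHypergraphTwoAsummable {α : Type*} [DecidableEq α] (G : SimpleGraph α) : Prop :=
  ¬∃ A1 A2 B1 B2 : Finset α,
    IndepInCliqueHypergraph G A1 ∧ IndepInCliqueHypergraph G A2 ∧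
    ¬IndepInCliqueHypergraph G B1 ∧ ¬IndepInCliqueHypergraph G B2 ∧
    ∀ v : α, chi A1 v + chi A2 v = chi B1 v + chi B2 v

/-- Auxiliary: `(A \ {a}) ∪ {b}` is independent when `A` is a maximal clique,
`a ∈ A`, `b ∉ A`, and `a` is adjacent to `b`. -/
lemma indep_swap {α : Type*} [DecidableEq α] (G : SimpleGraph α)
    (A : Finset α) (hA : IsMaxClique G A) (a b : α) (haA : a ∈ A) (hbA : b ∉ A)
    (hab : G.Adj a b) : IndepInCliqueHypergraph G (insert b (A.erase a)) := by
  rintro ⟨C, ⟨hCcl, hCmax⟩, hCsub⟩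
  have hab' : a ≠ b := fun h => hbA (h ▸ haA)
  by_cases hbC : b ∈ C
  · -- insert a C is a bigger clique
    have haC : a ∉ C := fun h => by
      rcases Finset.mem_insert.mp (hCsub h) with h' | h'
      · exact hab' h'
      · exact (Finset.mem_erase.mp h').1 rfl
    have hcl : G.IsClique ((insert a C : Finset α) : Set α) := by
      rw [Finset.coe_insert]
      apply hCcl.insert
      intro v hv hva
      rcases Finset.mem_insert.mp (hCsub hv) with h' | h'
      · subst h'; exact hab
      · have hvA : v ∈ A := Finset.mem_of_mem_erase h'
        exact (hA.1 hvA haA hva.symm).symm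
    have := hCmax (insert a C) hcl (Finset.subset_insert _ _)
    exact haC (this ▸ Finset.mem_insert_self a C)
  · -- C ⊆ A, so C = A, but a ∉ C
    have hCA : C ⊆ A := fun v hv => by
      rcases Finset.mem_insert.mp (hCsub hv) with h' | h'
      · exact absurd (h' ▸ hv) hbC
      · exact Finset.mem_of_mem_erase h'
    have hEq := hCmax A hA.1 hCA
    have : a ∈ C := hEq ▸ haA
    rcases Finset.mem_insert.mp (hCsub this) with h' | h'
    · exact hab' h'
    · exact (Finset.mem_erase.mp h').1 rfl

theorem stmt_16 {α : Type*} [Fintype α] [DecidableEq α] (G : SimpleGraph α)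
    (h2as : CliqueHypergraphTwoAsummable G)
    (A B : Finset α) (hA : IsMaxClique G A) (hB : IsMaxClique G B)
    (a b : α) (ha : a ∈ A \ B) (hb : b ∈ B \ A) :
    ¬G.Adj a b := by
  intro hab
  rcases Finset.mem_sdiff.mp ha with ⟨haA, haB⟩
  rcases Finset.mem_sdiff.mp hb with ⟨hbB, hbA⟩
  have hab' : a ≠ b := fun h => hbA (h ▸ haA)
  apply h2as
  refine ⟨insert b (A.erase a), insert a (B.erase b), A, B,
    indep_swap G A hA a b haA hbA hab,
    indep_swap G B hB b a hbB haB hab.symm,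
    fun h => h ⟨A, hA, Finset.Subset.refl A⟩,
    fun h => h ⟨B, hB, Finset.Subset.refl B⟩, ?_⟩
  intro v
  unfold chi
  by_cases hva : v = a <;> by_cases hvb : v = b <;>
    by_cases hvA : v ∈ A <;> by_cases hvB : v ∈ B <;>
    simp_all [Finset.mem_insert, Finset.mem_erase]
end

section
/- Let G be a finite simple graph whose clique hypergraph C(G) is 2-asummable. Then for every pair of maximal cliques A, B of G and every a ∈ A \ B and b ∈ B \ A, the set (A ∪ B) \ {a, b} contains no maximal clique of G (i.e., it is an independent set of the clique hypergraph of G). -/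
open Finset

/-- Swapping one vertex of a maximal clique for an adjacent outside vertex gives an
independent set. -/
lemma indep_swap_s17 {α : Type*} [DecidableEq α] (G : SimpleGraph α) {M : Finset α}
    (hM : IsMaxClique G M) {m y : α} (hm : m ∈ M) (hy : y ∉ M) (hadj : G.Adj m y) :
    IndepInCliqueHypergraph G ((M \ {m}) ∪ {y}) := by
  rintro ⟨D, hD, hDsub⟩
  by_cases hyD : y ∈ D
  · have hclique : G.IsClique ((insert m D : Finset α) : Set α) := by
      rw [Finset.coe_insert]
      refine hD.1.insert ?_
      intro u hu hne
      have hu' : u ∈ (M \ {m}) ∪ {y} := hDsub hu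
      rcases Finset.mem_union.mp hu' with h | h
      · rcases Finset.mem_sdiff.mp h with ⟨huM, hune⟩
        exact hM.1 hm huM (fun he => hune (Finset.mem_singleton.mpr he.symm))
      · rcases Finset.mem_singleton.mp h with rfl
        exact hadj
    have heq := hD.2 (insert m D) hclique (Finset.subset_insert _ _)
    have hmD : m ∈ D := heq ▸ Finset.mem_insert_self m D
    have := hDsub hmD
    rcases Finset.mem_union.mp this with h | h
    · exact (Finset.mem_sdiff.mp h).2 (Finset.mem_singleton.mpr rfl)
    · exact hadj.ne (Finset.mem_singleton.mp h)
  · have hsub : D ⊆ M := by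
      intro v hv
      rcases Finset.mem_union.mp (hDsub hv) with h | h
      · exact (Finset.mem_sdiff.mp h).1
      · exact absurd (Finset.mem_singleton.mp h ▸ hv) hyD
    have heq := hD.2 M hM.1 hsub
    have hmD : m ∈ D := heq ▸ hm
    have := hDsub hmD
    rcases Finset.mem_union.mp this with h | h
    · exact (Finset.mem_sdiff.mp h).2 (Finset.mem_singleton.mpr rfl)
    · exact hadj.ne (Finset.mem_singleton.mp h)

lemma chi_swap {α : Type*} [DecidableEq α] {P Q : Finset α} {p q : α}
    (hp : p ∈ P) (hpQ : p ∉ Q) (hq : q ∈ Q) (hqP : q ∉ P) (v : α) :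
    chi ((P \ {p}) ∪ {q}) v + chi ((Q \ {q}) ∪ {p}) v = chi P v + chi Q v := by
  simp only [chi, Finset.mem_union, Finset.mem_sdiff, Finset.mem_singleton]
  by_cases h1 : v = p <;> by_cases h2 : v = q <;> by_cases h3 : v ∈ P <;>
    by_cases h4 : v ∈ Q <;> simp_all

theorem stmt_17 {α : Type*} [Fintype α] [DecidableEq α] (G : SimpleGraph α)
    (h2as : CliqueHypergraphTwoAsummable G)
    (A B : Finset α) (hA : IsMaxClique G A) (hB : IsMaxClique G B)
    (a b : α) (ha : a ∈ A \ B) (hb : b ∈ B \ A) :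
    IndepInCliqueHypergraph G ((A ∪ B) \ {a, b}) := by
  rintro ⟨C, hC, hCsub⟩
  rcases Finset.mem_sdiff.mp ha with ⟨haA, haB⟩
  rcases Finset.mem_sdiff.mp hb with ⟨hbB, hbA⟩
  have haC : a ∉ C := by
    intro h
    have := Finset.mem_sdiff.mp (hCsub h)
    exact this.2 (by simp)
  have hbC : b ∉ C := by
    intro h
    have := Finset.mem_sdiff.mp (hCsub h)
    exact this.2 (by simp)
  have hCA : ¬ C ⊆ A := by
    intro h
    have := hC.2 A hA.1 h
    exact haC (this ▸ haA)
  have hCB : ¬ C ⊆ B := by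
    intro h
    have := hC.2 B hB.1 h
    exact hbC (this ▸ hbB)
  obtain ⟨c, hcC, hcA⟩ := Finset.not_subset.mp hCA
  obtain ⟨c', hc'C, hc'B⟩ := Finset.not_subset.mp hCB
  have hcB : c ∈ B := by
    have := (Finset.mem_sdiff.mp (hCsub hcC)).1
    rcases Finset.mem_union.mp this with h | h
    · exact absurd h hcA
    · exact h
  have hc'A : c' ∈ A := by
    have := (Finset.mem_sdiff.mp (hCsub hc'C)).1
    rcases Finset.mem_union.mp this with h | h
    · exact h
    · exact absurd h hc'B
  have depA : ¬IndepInCliqueHypergraph G A := not_not_intro ⟨A, hA, subset_rfl⟩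
  have depB : ¬IndepInCliqueHypergraph G B := not_not_intro ⟨B, hB, subset_rfl⟩
  have depC : ¬IndepInCliqueHypergraph G C := not_not_intro ⟨C, hC, subset_rfl⟩
  by_cases hcase : ∀ x ∈ A, x ∈ B → x ∈ C
  · -- A ∩ B ⊆ C; use c' ∈ A \ B and c ∈ B \ A, adjacent since both in C
    have hc'B' : c' ∉ B := hc'B
    have hne : c' ≠ c := fun h => hcA (h ▸ hc'A)
    have hadj : G.Adj c' c := hC.1 hc'C hcC hne
    exact h2as ⟨(A \ {c'}) ∪ {c}, (B \ {c}) ∪ {c'}, A, B,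
      indep_swap_s17 G hA hc'A hcA hadj,
      indep_swap_s17 G hB hcB hc'B hadj.symm,
      depA, depB, fun v => chi_swap hc'A hc'B hcB hcA v⟩
  · push_neg at hcase
    obtain ⟨x, hxA, hxB, hxC⟩ := hcase
    have hne : x ≠ c := fun h => hcA (h ▸ hxA)
    have hadj : G.Adj x c := hB.1 hxB hcB hne
    exact h2as ⟨(A \ {x}) ∪ {c}, (C \ {c}) ∪ {x}, A, C,
      indep_swap_s17 G hA hxA hcA hadj,
      indep_swap_s17 G hC hcC hxC hadj.symm,
      depA, depC, fun v => chi_swap hxA hxC hcC hcA v⟩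
end

section
/- Let G be a finite simple threshold graph. Then the clique hypergraph of G is 1-Sperner; that is, every two distinct maximal cliques A, B of G satisfy min(|A \ B|, |B \ A|) = 1. -/
open Finset

lemma adj_of_weight {α : Type*} [DecidableEq α] (G : SimpleGraph α) (w : α → ℕ) (t : ℕ)
    (hw : ∀ X : Finset α, (t ≤ ∑ v ∈ X, w v ↔ ∃ u ∈ X, ∃ v ∈ X, G.Adj u v))
    {u v : α} (hne : u ≠ v) (h : t ≤ w u + w v) : G.Adj u v := by
  have := (hw {u, v}).1 (by rwa [Finset.sum_pair hne])
  obtain ⟨x, hx, y, hy, hadj⟩ := this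
  simp only [Finset.mem_insert, Finset.mem_singleton] at hx hy
  rcases hx with rfl | rfl <;> rcases hy with rfl | rfl
  · exact absurd rfl hadj.ne
  · exact hadj
  · exact hadj.symm
  · exact absurd rfl hadj.ne

lemma weight_of_adj {α : Type*} [DecidableEq α] (G : SimpleGraph α) (w : α → ℕ) (t : ℕ)
    (hw : ∀ X : Finset α, (t ≤ ∑ v ∈ X, w v ↔ ∃ u ∈ X, ∃ v ∈ X, G.Adj u v))
    {u v : α} (h : G.Adj u v) : t ≤ w u + w v := by
  rw [← Finset.sum_pair h.ne]
  exact (hw {u, v}).2 ⟨u, by simp, v, by simp, h⟩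

lemma key {α : Type*} [DecidableEq α] (G : SimpleGraph α) (w : α → ℕ) (t : ℕ)
    (hw : ∀ X : Finset α, (t ≤ ∑ v ∈ X, w v ↔ ∃ u ∈ X, ∃ v ∈ X, G.Adj u v))
    (B : Finset α) (hB : IsMaxClique G B) (a1 b1 b2 : α)
    (ha1 : a1 ∉ B) (hb1 : b1 ∈ B) (hb2 : b2 ∈ B) (hne : b1 ≠ b2)
    (h1 : w b1 ≤ w a1) (h2 : w b2 ≤ w b1) : False := by
  have hadj : ∀ b ∈ B, G.Adj a1 b := by
    intro b hb
    have hab : a1 ≠ b := fun h => ha1 (h ▸ hb)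
    by_cases hbb1 : b = b1
    · subst hbb1
      have := weight_of_adj G w t hw (hB.1 hb hb2 hne)
      exact adj_of_weight G w t hw hab (by omega)
    · have := weight_of_adj G w t hw (hB.1 hb1 hb (Ne.symm hbb1))
      exact adj_of_weight G w t hw hab (by omega)
  have hclique : G.IsClique ((insert a1 B : Finset α) : Set α) := by
    rw [Finset.coe_insert]
    exact hB.1.insert (fun b hb _ => hadj b hb)
  have := hB.2 (insert a1 B) hclique (Finset.subset_insert _ _)
  exact ha1 (this ▸ Finset.mem_insert_self a1 B)

theorem stmt_18 {α : Type*} [Fintype α] [DecidableEq α] (G : SimpleGraph α)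
    (hthr : ∃ w : α → ℕ, ∃ t : ℕ, ∀ X : Finset α,
      (t ≤ ∑ v ∈ X, w v ↔ ∃ u ∈ X, ∃ v ∈ X, G.Adj u v)) :
    ∀ A B : Finset α, IsMaxClique G A → IsMaxClique G B → A ≠ B →
      min (A \ B).card (B \ A).card = 1 := by
  obtain ⟨w, t, hw⟩ := hthr
  intro A B hA hB hne
  have hAB : (A \ B).Nonempty := by
    rw [Finset.sdiff_nonempty]
    intro hsub
    exact hne (hA.2 B hB.1 hsub)
  have hBA : (B \ A).Nonempty := by
    rw [Finset.sdiff_nonempty]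
    intro hsub
    exact hne ((hB.2 A hA.1 hsub).symm)
  have h1 : 1 ≤ (A \ B).card := Finset.card_pos.2 hAB
  have h2 : 1 ≤ (B \ A).card := Finset.card_pos.2 hBA
  by_contra hmin
  have hge : 2 ≤ (A \ B).card ∧ 2 ≤ (B \ A).card := by omega
  obtain ⟨a1, ha1, a2, ha2, hane⟩ := Finset.one_lt_card.1 hge.1
  obtain ⟨b1, hb1, b2, hb2, hbne⟩ := Finset.one_lt_card.1 hge.2
  -- order within each pair by weight, wlog
  wlog hwa : w a2 ≤ w a1 generalizing a1 a2
  · exact this a2 ha2 a1 ha1 hane.symm (by omega)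
  wlog hwb : w b2 ≤ w b1 generalizing b1 b2
  · exact this b2 hb2 b1 hb1 hbne.symm (by omega)
  rcases le_total (w b1) (w a1) with hle | hle
  · have ha1B : a1 ∉ B := (Finset.mem_sdiff.1 ha1).2
    exact key G w t hw B hB a1 b1 b2 ha1B (Finset.mem_sdiff.1 hb1).1
      (Finset.mem_sdiff.1 hb2).1 hbne hle hwb
  · have hb1A : b1 ∉ A := (Finset.mem_sdiff.1 hb1).2
    exact key G w t hw A hA b1 a1 a2 hb1A (Finset.mem_sdiff.1 ha1).1
      (Finset.mem_sdiff.1 ha2).1 hane hle hwa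
end
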